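/- arXiv:1710.02119 — 2 statements merged into one kernel-verified Lean document; each statement's English description precedes it below -/
import Mathlib

section
/- Let Q̄ = (Q, I) be a gentle quiver with relations over an algebraically closed field k and let J be a subset of the vertices of Q̄, with e_J the sum of the primitive idempotents of kQ/I corresponding to the vertices in J. Then the quotient kQ_J/I_J of the path algebra of the shortcut quiver Q̄_J = (Q_J, I_J) is a gentle algebra, and it is isomorphic as a k-algebra to the corner algebra e_J (kQ/I) e_J. -/
open scoped Classical

/-- A quiver with relations: a set of vertices, a set of arrows with source and target maps,
and a set of relations, each relation being a pair of consecutive arrows (the first component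
being traversed first). -/
structure QuivRel where
  V : Type
  E : Type
  src : E → V
  tgt : E → V
  rel : Set (E × E)

namespace QuivRel

variable (G : QuivRel)

/-- Paths in a quiver with relations. -/
inductive PathG : G.V → G.V → Type
  | nil (a : G.V) : PathG a a
  | cons {a b c : G.V} (p : PathG a b) (e : G.E) (h₁ : G.src e = b) (h₂ : G.tgt e = c) :
      PathG a c

namespace PathG

variable {G}

/-- The length of a path. -/
def length : {a b : G.V} → PathG G a b → ℕ
  | _, _, .nil _ => 0
  | _, _, .cons p _ _ _ => p.length + 1

/-- The list of arrows traversed by a path, in order. -/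
def arrows : {a b : G.V} → PathG G a b → List G.E
  | _, _, .nil _ => []
  | _, _, .cons p e _ _ => p.arrows ++ [e]

/-- The internal vertices of a path (all visited vertices except the two endpoints). -/
def mids : {a b : G.V} → PathG G a b → List G.V
  | _, _, .nil _ => []
  | _, _, @cons _ _ b _ p _ _ _ => p.mids ++ (if p.length = 0 then [] else [b])

/-- Concatenation of paths. -/
def concat : {a b c : G.V} → PathG G a b → PathG G b c → PathG G a c
  | _, _, _, p, .nil _ => p
  | _, _, _, p, .cons q e h₁ h₂ => .cons (p.concat q) e h₁ h₂

end PathG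

/-- A path contains (i.e., factors through) a relation of `G`. -/
def HasRel {a b : G.V} (p : PathG G a b) : Prop :=
  ∃ (l₁ : List G.E) (x y : G.E) (l₂ : List G.E),
    p.arrows = l₁ ++ x :: y :: l₂ ∧ (x, y) ∈ G.rel

/-- The gentleness conditions of Butler–Ringel for a quiver with relations. -/
def IsGentle : Prop :=
  (∀ r ∈ G.rel, G.tgt r.1 = G.src r.2) ∧
  (∀ v : G.V, {e : G.E | G.src e = v}.Subsingleton ∨
    ∃ e₁ e₂, e₁ ≠ e₂ ∧ {e : G.E | G.src e = v} = {e₁, e₂}) ∧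
  (∀ v : G.V, {e : G.E | G.tgt e = v}.Subsingleton ∨
    ∃ e₁ e₂, e₁ ≠ e₂ ∧ {e : G.E | G.tgt e = v} = {e₁, e₂}) ∧
  (∀ a b c : G.E, G.tgt a = G.src b → G.tgt a = G.src c →
    (a, b) ∉ G.rel → (a, c) ∉ G.rel → b = c) ∧
  (∀ a b c : G.E, G.tgt a = G.src b → G.tgt a = G.src c →
    (a, b) ∈ G.rel → (a, c) ∈ G.rel → b = c) ∧
  (∀ a b c : G.E, G.tgt a = G.src c → G.tgt b = G.src c →
    (a, c) ∉ G.rel → (b, c) ∉ G.rel → a = b) ∧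
  (∀ a b c : G.E, G.tgt a = G.src c → G.tgt b = G.src c →
    (a, c) ∈ G.rel → (b, c) ∈ G.rel → a = b)

/-- The shortcut quiver with relations `G_J`: its vertices are the elements of `J`, its arrows
are the relation-free paths of `G` with endpoints in `J` and no internal vertex in `J`, and its
relations are the pairs of composable such paths whose concatenation contains a relation
of `G`. -/
def shortcut (J : Set G.V) : QuivRel where
  V := J
  E := Σ (a : J) (b : J),
    {p : PathG G a.1 b.1 // 0 < p.length ∧ (∀ v ∈ p.mids, v ∉ J) ∧ ¬ G.HasRel p}
  src := fun x => x.1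
  tgt := fun x => x.2.1
  rel := {y | ∃ h : y.1.2.1 = y.2.1,
    G.HasRel ((congrArg Subtype.val h ▸ y.1.2.2.1 : PathG G y.1.1.1 y.2.1.1).concat y.2.2.2.1)}

/-- Isomorphism of quivers with relations. -/
def Iso (G H : QuivRel) : Prop :=
  ∃ (fV : G.V ≃ H.V) (fE : G.E ≃ H.E),
    (∀ e, H.src (fE e) = fV (G.src e)) ∧ (∀ e, H.tgt (fE e) = fV (G.tgt e)) ∧
    (∀ a b : G.E, (a, b) ∈ G.rel ↔ (fE a, fE b) ∈ H.rel)

end QuivRel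

section PathAlg

variable (k : Type) [CommRing k]

namespace QuivRel

/-- The defining relations of the path algebra of a quiver with relations `G` over `k`, as
relations on the free algebra on the vertices and arrows of `G`: the vertices become a complete
family of orthogonal idempotents, the arrows are composable according to their sources and
targets, and the relations of `G` become zero. -/
inductive PARel (G : QuivRel) [Fintype G.V] :
    FreeAlgebra k (G.V ⊕ G.E) → FreeAlgebra k (G.V ⊕ G.E) → Prop
  | vmul (v w : G.V) : PARel G (FreeAlgebra.ι k (Sum.inl v) * FreeAlgebra.ι k (Sum.inl w))
      (if v = w then FreeAlgebra.ι k (Sum.inl v) else 0)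
  | vsum : PARel G (∑ v : G.V, FreeAlgebra.ι k (Sum.inl v)) 1
  | etgt (e : G.E) : PARel G
      (FreeAlgebra.ι k (Sum.inl (G.tgt e)) * FreeAlgebra.ι k (Sum.inr e))
      (FreeAlgebra.ι k (Sum.inr e))
  | esrc (e : G.E) : PARel G
      (FreeAlgebra.ι k (Sum.inr e) * FreeAlgebra.ι k (Sum.inl (G.src e)))
      (FreeAlgebra.ι k (Sum.inr e))
  | zrel (a b : G.E) (h : (a, b) ∈ G.rel) : PARel G
      (FreeAlgebra.ι k (Sum.inr b) * FreeAlgebra.ι k (Sum.inr a)) 0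

/-- The path algebra with relations `kG = kQ/I` of a quiver with relations `G` over `k`. -/
abbrev Alg (G : QuivRel) [Fintype G.V] : Type := RingQuot (PARel k G)

/-- The idempotent of the path algebra attached to a vertex (the lazy path at this vertex). -/
noncomputable def vtx (G : QuivRel) [Fintype G.V] (v : G.V) : Alg k G :=
  RingQuot.mkRingHom (PARel k G) (FreeAlgebra.ι k (Sum.inl v))

theorem vtx_mul (G : QuivRel) [Fintype G.V] (v w : G.V) :
    vtx k G v * vtx k G w = if v = w then vtx k G v else 0 := by
  have h := RingQuot.mkRingHom_rel (PARel.vmul (k := k) v w)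
  rw [map_mul] at h
  unfold vtx
  rw [h]
  split <;> simp

/-- The sum of the vertex idempotents of the path algebra attached to a subset `J` of the
vertices. -/
noncomputable def vtxSum (G : QuivRel) [Fintype G.V] (J : Set G.V) [Fintype J] : Alg k G :=
  ∑ j : J, vtx k G j.1

theorem vtxSum_idem (G : QuivRel) [Fintype G.V] (J : Set G.V) [Fintype J] :
    vtxSum k G J * vtxSum k G J = vtxSum k G J := by
  unfold vtxSum
  rw [Finset.sum_mul_sum]
  apply Finset.sum_congr rfl
  intro i _
  rw [Finset.sum_eq_single i (fun j _ hj => by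
      rw [vtx_mul, if_neg (fun hh => hj (Subtype.ext hh.symm))])
    (fun h => (h (Finset.mem_univ i)).elim), vtx_mul, if_pos rfl]

end QuivRel

end PathAlg
/-- The corner ring `eRe` of an idempotent `e`. -/
def Corner {R : Type} [Ring R] (e : R) (_he : e * e = e) : Type :=
  {x : R // e * x = x ∧ x * e = x}

namespace Corner

variable {R : Type} [Ring R] (e : R) (he : e * e = e)

instance : Add (Corner e he) := ⟨fun x y => ⟨x.1 + y.1, by
  constructor
  · rw [mul_add, x.2.1, y.2.1]
  · rw [add_mul, x.2.2, y.2.2]⟩⟩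
instance : Neg (Corner e he) := ⟨fun x => ⟨-x.1, by
  constructor
  · rw [mul_neg, x.2.1]
  · rw [neg_mul, x.2.2]⟩⟩
instance : Zero (Corner e he) := ⟨⟨0, by simp⟩⟩
instance : One (Corner e he) := ⟨⟨e, he, he⟩⟩
instance : Mul (Corner e he) := ⟨fun x y => ⟨x.1 * y.1, by
  constructor
  · rw [← mul_assoc, x.2.1]
  · rw [mul_assoc, y.2.2]⟩⟩

instance instRing : Ring (Corner e he) where
  add_assoc a b c := Subtype.ext (add_assoc _ _ _)
  zero_add a := Subtype.ext (zero_add _)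
  add_zero a := Subtype.ext (add_zero _)
  add_comm a b := Subtype.ext (add_comm _ _)
  neg_add_cancel a := Subtype.ext (neg_add_cancel _)
  mul_assoc a b c := Subtype.ext (mul_assoc _ _ _)
  one_mul a := Subtype.ext a.2.1
  mul_one a := Subtype.ext a.2.2
  left_distrib a b c := Subtype.ext (left_distrib _ _ _)
  right_distrib a b c := Subtype.ext (right_distrib _ _ _)
  zero_mul a := Subtype.ext (zero_mul _)
  mul_zero a := Subtype.ext (mul_zero _)
  nsmul := nsmulRec
  zsmul := zsmulRec

variable (k : Type) [CommRing k] [Algebra k R]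

theorem hce (c : k) : e * algebraMap k R c = algebraMap k R c * e := (Algebra.commutes c e).symm

noncomputable instance instAlgebra : Algebra k (Corner e he) where
  algebraMap := {
    toFun c := ⟨algebraMap k R c * e, by
      constructor
      · rw [← mul_assoc, hce, mul_assoc, he]
      · rw [mul_assoc, he]⟩
    map_one' := Subtype.ext (by show algebraMap k R 1 * e = e; rw [map_one, one_mul])
    map_mul' a b := Subtype.ext (by
      show algebraMap k R (a * b) * e = (algebraMap k R a * e) * (algebraMap k R b * e)
      rw [map_mul, mul_assoc]
      conv_rhs => rw [mul_assoc, ← mul_assoc e, hce, mul_assoc, he])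
    map_zero' := Subtype.ext (by show algebraMap k R 0 * e = 0; rw [map_zero, zero_mul])
    map_add' a b := Subtype.ext (by
      show algebraMap k R (a + b) * e = algebraMap k R a * e + algebraMap k R b * e
      rw [map_add, add_mul]) }
  commutes' c x := Subtype.ext (by
    show (algebraMap k R c * e) * x.1 = x.1 * (algebraMap k R c * e)
    rw [mul_assoc, x.2.1, Algebra.commutes c x.1]
    conv_rhs => rw [← hce, ← mul_assoc, x.2.2])
  smul c x := ⟨c • x.1, by
    constructor
    · rw [mul_smul_comm, x.2.1]
    · rw [smul_mul_assoc, x.2.2]⟩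
  smul_def' c x := Subtype.ext (by
    show c • x.1 = (algebraMap k R c * e) * x.1
    rw [mul_assoc, x.2.1, Algebra.smul_def])

end Corner


instance (G : QuivRel) (J : Set G.V) [Fintype J] : Fintype (G.shortcut J).V :=
  inferInstanceAs (Fintype J)


/-! ### Auxiliary list and path lemmas -/

namespace QuivRel

variable {G : QuivRel}

/-- A list of arrows contains a relation of `G`. -/
def LRel (G : QuivRel) (l : List G.E) : Prop :=
  ∃ (l₁ : List G.E) (x y : G.E) (l₂ : List G.E), l = l₁ ++ x :: y :: l₂ ∧ (x, y) ∈ G.rel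

theorem hasRel_iff_lrel {a b : G.V} (p : PathG G a b) : G.HasRel p ↔ G.LRel p.arrows :=
  Iff.rfl

theorem lrel_iff_getElem (l : List G.E) :
    G.LRel l ↔ ∃ (i : ℕ) (h : i + 1 < l.length), (l[i], l[i+1]) ∈ G.rel := by
  constructor
  · rintro ⟨l₁, x, y, l₂, rfl, hr⟩
    induction l₁ with
    | nil => exact ⟨0, by simp, by simpa using hr⟩
    | cons a t ih =>
      obtain ⟨i, hi, hri⟩ := ih
      exact ⟨i + 1, by simpa using hi, by simpa using hri⟩
  · rintro ⟨i, h, hr⟩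
    induction l generalizing i with
    | nil => simp at h
    | cons a t ih =>
      cases i with
      | zero =>
        cases t with
        | nil => simp at h
        | cons b t' => exact ⟨[], a, b, t', rfl, by simpa using hr⟩
      | succ n =>
        obtain ⟨l₁, x, y, l₂, heq, hxy⟩ := ih n (by simpa using h) (by simpa using hr)
        exact ⟨a :: l₁, x, y, l₂, by rw [List.cons_append, heq], hxy⟩

theorem not_lrel_iff_chain' (l : List G.E) :
    ¬ G.LRel l ↔ List.Chain' (fun x y => (x, y) ∉ G.rel) l := by
  rw [lrel_iff_getElem, List.Chain', List.isChain_iff_getElem]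
  push_neg
  constructor
  · intro H i h
    simpa using H i (by omega)
  · intro H i h
    simpa using H i (by omega)

theorem lrel_append_left {l₁ l₂ : List G.E} (h : G.LRel l₁) : G.LRel (l₁ ++ l₂) := by
  obtain ⟨m₁, x, y, m₂, rfl, hr⟩ := h
  exact ⟨m₁, x, y, m₂ ++ l₂, by simp, hr⟩

theorem lrel_append_right {l₁ l₂ : List G.E} (h : G.LRel l₂) : G.LRel (l₁ ++ l₂) := by
  obtain ⟨m₁, x, y, m₂, rfl, hr⟩ := h
  exact ⟨l₁ ++ m₁, x, y, m₂, by simp, hr⟩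

theorem lrel_junction {l₁ l₂ : List G.E} {x y : G.E} (hx : l₁.getLast? = some x)
    (hy : l₂.head? = some y) (h : (x, y) ∈ G.rel) : G.LRel (l₁ ++ l₂) := by
  obtain ⟨l₁', rfl⟩ := List.getLast?_eq_some_iff.mp hx
  cases l₂ with
  | nil => simp at hy
  | cons b t =>
    simp only [List.head?_cons, Option.some.injEq] at hy
    exact ⟨l₁', x, b, t, by simp, hy ▸ h⟩

theorem lrel_append_cases {l₁ l₂ : List G.E} (h : G.LRel (l₁ ++ l₂)) :
    G.LRel l₁ ∨ G.LRel l₂ ∨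
      ∃ x y, l₁.getLast? = some x ∧ l₂.head? = some y ∧ (x, y) ∈ G.rel := by
  rw [lrel_iff_getElem] at h
  obtain ⟨i, hi, hr⟩ := h
  have hlen : (l₁ ++ l₂).length = l₁.length + l₂.length := by simp
  rcases lt_trichotomy (i + 1) l₁.length with h1 | h1 | h1
  · left
    rw [lrel_iff_getElem]
    refine ⟨i, h1, ?_⟩
    rwa [List.getElem_append, dif_pos (by omega), List.getElem_append, dif_pos (by omega)] at hr
  · right; right
    have hi0 : 0 < l₁.length := by omega
    have hil : i < l₁.length := by omega
    have h2 : ¬ (i + 1 < l₁.length) := by omega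
    rw [List.getElem_append, dif_pos hil, List.getElem_append, dif_neg h2] at hr
    have hy : 0 < l₂.length := by rw [hlen] at hi; omega
    refine ⟨l₁[i], l₂[0], ?_, ?_, ?_⟩
    · rw [List.getLast?_eq_getElem?]
      have e : l₁.length - 1 = i := by omega
      rw [e, List.getElem?_eq_getElem hil]
    · rw [List.head?_eq_getElem?, List.getElem?_eq_getElem hy]
    · have e : i + 1 - l₁.length = 0 := by omega
      simp only [e] at hr
      exact hr
  · right; left
    rw [lrel_iff_getElem]
    have hi2 : i + 1 - l₁.length < l₂.length := by rw [hlen] at hi; omega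
    refine ⟨i - l₁.length, by omega, ?_⟩
    rw [List.getElem_append, dif_neg (by omega), List.getElem_append, dif_neg (by omega)] at hr
    have e1 : i + 1 - l₁.length = i - l₁.length + 1 := by omega
    simp only [e1] at hr
    exact hr

namespace PathG

@[simp] theorem length_nil (a : G.V) : (PathG.nil (G := G) a).length = 0 := by
  simp only [length]

@[simp] theorem length_cons {a b c : G.V} (p : PathG G a b) (e : G.E) (h₁ : G.src e = b)
    (h₂ : G.tgt e = c) : (p.cons e h₁ h₂).length = p.length + 1 := by
  simp only [length]

@[simp] theorem arrows_nil (a : G.V) : (PathG.nil (G := G) a).arrows = [] := by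
  simp only [arrows]

@[simp] theorem arrows_cons {a b c : G.V} (p : PathG G a b) (e : G.E) (h₁ : G.src e = b)
    (h₂ : G.tgt e = c) : (p.cons e h₁ h₂).arrows = p.arrows ++ [e] := by
  simp only [arrows]

@[simp] theorem mids_nil (a : G.V) : (PathG.nil (G := G) a).mids = [] := by
  simp only [mids]

@[simp] theorem mids_cons {a b c : G.V} (p : PathG G a b) (e : G.E) (h₁ : G.src e = b)
    (h₂ : G.tgt e = c) :
    (p.cons e h₁ h₂).mids = p.mids ++ (if p.length = 0 then [] else [b]) := by
  simp only [mids]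

@[simp] theorem concat_nil {a b : G.V} (p : PathG G a b) : p.concat (PathG.nil b) = p := by
  simp only [concat]

@[simp] theorem concat_cons {a b c d : G.V} (p : PathG G a b) (q : PathG G b c) (e : G.E)
    (h₁ : G.src e = c) (h₂ : G.tgt e = d) :
    p.concat (q.cons e h₁ h₂) = (p.concat q).cons e h₁ h₂ := by
  simp only [concat]

theorem length_arrows {a b : G.V} (p : PathG G a b) : p.arrows.length = p.length := by
  induction p with
  | nil => simp
  | cons p e h₁ h₂ ih => simp [ih]

theorem eq_of_length_zero {a b : G.V} (p : PathG G a b) (h : p.length = 0) : a = b := by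
  cases p with
  | nil => rfl
  | cons p e h₁ h₂ => simp [length] at h

theorem arrows_ne_nil {a b : G.V} (p : PathG G a b) (h : 0 < p.length) : p.arrows ≠ [] := by
  rw [← List.length_pos_iff_ne_nil, length_arrows]; exact h

theorem nil_concat {a b : G.V} (p : PathG G a b) : (PathG.nil a).concat p = p := by
  induction p with
  | nil => simp
  | cons p e h₁ h₂ ih => rw [concat_cons, ih]

theorem length_concat {a b c : G.V} (p : PathG G a b) (q : PathG G b c) :
    (p.concat q).length = p.length + q.length := by
  induction q with
  | nil => simp
  | cons q e h₁ h₂ ih => simp [ih]; omega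

theorem arrows_concat {a b c : G.V} (p : PathG G a b) (q : PathG G b c) :
    (p.concat q).arrows = p.arrows ++ q.arrows := by
  induction q with
  | nil => simp
  | cons q e h₁ h₂ ih => simp [ih]

theorem head?_src {a b : G.V} (p : PathG G a b) {x : G.E} (h : p.arrows.head? = some x) :
    G.src x = a := by
  induction p with
  | nil => simp at h
  | cons p e h₁ h₂ ih =>
    rw [arrows_cons, List.head?_append] at h
    cases hpa : p.arrows.head? with
    | some y => rw [hpa] at h; simp at h; subst h; exact ih hpa
    | none =>
      rw [hpa] at h
      simp at h
      subst h
      rw [h₁]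
      exact (eq_of_length_zero p (by
        have := length_arrows p
        rw [List.head?_eq_none_iff.mp hpa] at this
        simpa using this.symm)).symm

theorem getLast?_tgt {a b : G.V} (p : PathG G a b) {x : G.E}
    (h : p.arrows.getLast? = some x) : G.tgt x = b := by
  cases p with
  | nil => simp at h
  | cons p e h₁ h₂ =>
    rw [arrows_cons, List.getLast?_concat] at h
    cases h
    exact h₂

theorem chain'_comp {a b : G.V} (p : PathG G a b) :
    List.Chain' (fun e f => G.tgt e = G.src f) p.arrows := by
  induction p with
  | nil => simp [List.Chain']
  | cons p e h₁ h₂ ih =>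
    rw [arrows_cons, List.Chain', List.isChain_append]
    refine ⟨ih, List.isChain_singleton e, ?_⟩
    intro x hx y hy
    simp only [List.head?_cons, Option.mem_def, Option.some.injEq] at hy
    subst hy
    rw [getLast?_tgt p hx, h₁]

theorem mids_eq {a b : G.V} (p : PathG G a b) :
    p.mids = (p.arrows.map G.tgt).dropLast := by
  induction p with
  | nil => simp
  | cons p e h₁ h₂ ih =>
    rw [arrows_cons, mids_cons, List.map_append, List.map_singleton, List.dropLast_concat, ih]
    by_cases h : p.length = 0
    · have : p.arrows = [] := by
        rw [← List.length_eq_zero_iff, length_arrows]; exact h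
      simp [this, h]
    · rw [if_neg h]
      have hne : p.arrows ≠ [] := arrows_ne_nil p (by omega)
      have hne' : p.arrows.map G.tgt ≠ [] := by simpa using hne
      conv_rhs => rw [← List.dropLast_append_getLast hne']
      congr 1
      rw [List.getLast_map]
      rw [getLast?_tgt p (List.getLast?_eq_getLast hne)]

theorem sigma_eq_of_arrows : ∀ {a b c : G.V} (p : PathG G a b) (q : PathG G a c),
    p.arrows = q.arrows → (⟨b, p⟩ : Σ x, PathG G a x) = ⟨c, q⟩ := by
  intro a b c p q h
  induction p generalizing c q with
  | nil =>
    cases q with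
    | nil => rfl
    | cons q f g₁ g₂ => simp at h
  | cons p e h₁ h₂ ih =>
    cases q with
    | nil => simp at h
    | cons q f g₁ g₂ =>
      rw [arrows_cons, arrows_cons] at h
      obtain ⟨harr, hef⟩ := List.append_inj' h rfl
      simp only [List.cons.injEq] at hef
      obtain ⟨rfl, -⟩ := hef
      obtain ⟨rfl, hpq⟩ := Sigma.mk.inj_iff.mp (ih q harr)
      obtain rfl := eq_of_heq hpq
      subst h₂
      subst g₂
      rfl

end PathG

end QuivRel


/-! ### Gentleness of the shortcut quiver -/

namespace QuivRel

variable {G : QuivRel}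

theorem arrows_cast {a b b' : G.V} (h : b = b') (p : PathG G a b) :
    (h ▸ p : PathG G a b').arrows = p.arrows := by cases h; rfl

theorem two_transfer {α β : Type _} {S : Set α} {T : Set β} (f : α → β)
    (hmap : ∀ x ∈ S, f x ∈ T) (hinj : ∀ x ∈ S, ∀ y ∈ S, f x = f y → x = y)
    (hT : T.Subsingleton ∨ ∃ e₁ e₂, e₁ ≠ e₂ ∧ T = {e₁, e₂}) :
    S.Subsingleton ∨ ∃ x y, x ≠ y ∧ S = {x, y} := by
  by_cases hs : S.Subsingleton
  · exact Or.inl hs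
  right
  obtain ⟨x, hx, y, hy, hxy⟩ := Set.not_subsingleton_iff.mp hs
  refine ⟨x, y, hxy, ?_⟩
  have hfxy : f x ≠ f y := fun h => hxy (hinj x hx y hy h)
  rcases hT with hT | ⟨e₁, e₂, he, hTe⟩
  · exact absurd (hT (hmap x hx) (hmap y hy)) hfxy
  ext z
  simp only [Set.mem_insert_iff, Set.mem_singleton_iff]
  constructor
  · intro hz
    have h1 : f x ∈ ({e₁, e₂} : Set β) := hTe ▸ hmap x hx
    have h2 : f y ∈ ({e₁, e₂} : Set β) := hTe ▸ hmap y hy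
    have h3 : f z ∈ ({e₁, e₂} : Set β) := hTe ▸ hmap z hz
    simp only [Set.mem_insert_iff, Set.mem_singleton_iff] at h1 h2 h3
    have : f z = f x ∨ f z = f y := by
      rcases h1 with h1 | h1 <;> rcases h2 with h2 | h2 <;> rcases h3 with h3 | h3 <;> simp_all
    rcases this with h | h
    · exact Or.inl (hinj z hz x hx h)
    · exact Or.inr (hinj z hz y hy h)
  · rintro (rfl | rfl) <;> assumption

theorem fwd_unique (hG : G.IsGentle) (J : Set G.V) :
    ∀ (l l' : List G.E) (a : G.E),
      List.Chain' (fun e f => G.tgt e = G.src f) (a :: l) →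
      List.Chain' (fun e f => G.tgt e = G.src f) (a :: l') →
      List.Chain' (fun e f => (e, f) ∉ G.rel) (a :: l) →
      List.Chain' (fun e f => (e, f) ∉ G.rel) (a :: l') →
      (∀ x ∈ ((a :: l).map G.tgt).dropLast, x ∉ J) →
      (∀ x ∈ ((a :: l').map G.tgt).dropLast, x ∉ J) →
      G.tgt ((a :: l).getLast (by simp)) ∈ J →
      G.tgt ((a :: l').getLast (by simp)) ∈ J → l = l' := by
  intro l
  induction l with
  | nil =>
    intro l' a hc hc' hr hr' hm hm' he he'
    cases l' with
    | nil => rfl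
    | cons b m =>
      exfalso
      exact hm' (G.tgt a) (by simp) (by simpa using he)
  | cons b m ih =>
    intro l' a hc hc' hr hr' hm hm' he he'
    cases l' with
    | nil =>
      exfalso
      exact hm (G.tgt a) (by simp) (by simpa using he')
    | cons c m' =>
      have hcomp1 : G.tgt a = G.src b := (List.isChain_cons_cons.mp hc).1
      have hcomp2 : G.tgt a = G.src c := (List.isChain_cons_cons.mp hc').1
      have hnr1 : (a, b) ∉ G.rel := (List.isChain_cons_cons.mp hr).1
      have hnr2 : (a, c) ∉ G.rel := (List.isChain_cons_cons.mp hr').1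
      obtain rfl : b = c := hG.2.2.2.1 a b c hcomp1 hcomp2 hnr1 hnr2
      have hmm : m = m' := by
        refine ih m' b (List.isChain_cons_cons.mp hc).2 (List.isChain_cons_cons.mp hc').2
          (List.isChain_cons_cons.mp hr).2 (List.isChain_cons_cons.mp hr').2 ?_ ?_ ?_ ?_
        · intro x hx
          apply hm x
          rw [List.map_cons, List.map_cons, List.dropLast_cons₂]
          exact List.mem_cons_of_mem _ (by simpa using hx)
        · intro x hx
          apply hm' x
          rw [List.map_cons, List.map_cons, List.dropLast_cons₂]
          exact List.mem_cons_of_mem _ (by simpa using hx)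
        · rwa [List.getLast_cons (by simp)] at he
        · rwa [List.getLast_cons (by simp)] at he'
      rw [hmm]

theorem bwd_unique (hG : G.IsGentle) (J : Set G.V) :
    ∀ (l l' : List G.E) (a : G.E),
      List.Chain' (fun e f => G.tgt e = G.src f) (l ++ [a]) →
      List.Chain' (fun e f => G.tgt e = G.src f) (l' ++ [a]) →
      List.Chain' (fun e f => (e, f) ∉ G.rel) (l ++ [a]) →
      List.Chain' (fun e f => (e, f) ∉ G.rel) (l' ++ [a]) →
      (∀ x ∈ l.map G.tgt, x ∉ J) →
      (∀ x ∈ l'.map G.tgt, x ∉ J) →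
      G.src ((l ++ [a]).head (by simp)) ∈ J →
      G.src ((l' ++ [a]).head (by simp)) ∈ J → l = l' := by
  intro l
  induction l using List.reverseRecOn with
  | nil =>
    intro l' a hc hc' hr hr' hm hm' hs hs'
    rcases l'.eq_nil_or_concat with rfl | ⟨m, b, rfl⟩
    · rfl
    · simp only [List.concat_eq_append] at hc' hr' hm' hs'
      exfalso
      have hba : G.tgt b = G.src a := by
        have := (List.isChain_append.mp hc').2.2
        exact this b (by simp) a (by simp)
      have hsa : G.src a ∈ J := by simpa using hs
      exact hm' (G.tgt b) (by simp) (hba ▸ hsa)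
  | append_singleton m b ih =>
    intro l' a hc hc' hr hr' hm hm' hs hs'
    rcases l'.eq_nil_or_concat with rfl | ⟨m', c, rfl⟩
    · exfalso
      have hba : G.tgt b = G.src a := by
        have := (List.isChain_append.mp hc).2.2
        exact this b (by simp) a (by simp)
      have hsa : G.src a ∈ J := by simpa using hs'
      exact hm (G.tgt b) (by simp) (hba ▸ hsa)
    · simp only [List.concat_eq_append] at hc' hr' hm' hs' ⊢
      have hba : G.tgt b = G.src a := by
        have := (List.isChain_append.mp hc).2.2
        exact this b (by simp) a (by simp)
      have hca : G.tgt c = G.src a := by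
        have := (List.isChain_append.mp hc').2.2
        exact this c (by simp) a (by simp)
      have hnr1 : (b, a) ∉ G.rel := by
        have := (List.isChain_append.mp hr).2.2
        exact this b (by simp) a (by simp)
      have hnr2 : (c, a) ∉ G.rel := by
        have := (List.isChain_append.mp hr').2.2
        exact this c (by simp) a (by simp)
      obtain rfl : b = c := hG.2.2.2.2.2.1 b c a hba hca hnr1 hnr2
      have hmm : m = m' := by
        refine ih m' b (List.isChain_append.mp hc).1 (List.isChain_append.mp hc').1
          (List.isChain_append.mp hr).1 (List.isChain_append.mp hr').1 ?_ ?_ ?_ ?_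
        · intro x hx
          exact hm x (by simp only [List.map_append, List.mem_append]; exact Or.inl hx)
        · intro x hx
          exact hm' x (by simp only [List.map_append, List.mem_append]; exact Or.inl hx)
        · have : ((m ++ [b]) ++ [a]).head (by simp) = (m ++ [b]).head (by simp) := by
            rw [List.head_append]
            simp
          rwa [this] at hs
        · have : ((m' ++ [b]) ++ [a]).head (by simp) = (m' ++ [b]).head (by simp) := by
            rw [List.head_append]
            simp
          rwa [this] at hs'
      rw [hmm]

section ShortcutEdges

variable {J : Set G.V}

/-- Extensionality of shortcut arrows. -/
theorem shortcut_edge_ext (x y : (G.shortcut J).E)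
    (h1 : x.1 = y.1) (h2 : x.2.2.1.arrows = y.2.2.1.arrows) : x = y := by
  obtain ⟨a, b, p, hp⟩ := x
  obtain ⟨a', b', q, hq⟩ := y
  cases h1
  have := PathG.sigma_eq_of_arrows p q h2
  obtain ⟨hb, hpq⟩ := Sigma.mk.inj_iff.mp this
  obtain rfl : b = b' := Subtype.ext hb
  obtain rfl := eq_of_heq hpq
  rfl

theorem edge_arrows_ne_nil (x : (G.shortcut J).E) : x.2.2.1.arrows ≠ [] :=
  PathG.arrows_ne_nil _ x.2.2.2.1

/-- The first arrow of a shortcut arrow. -/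
noncomputable def firstE (x : (G.shortcut J).E) : G.E :=
  x.2.2.1.arrows.head (edge_arrows_ne_nil x)

/-- The last arrow of a shortcut arrow. -/
noncomputable def lastE (x : (G.shortcut J).E) : G.E :=
  x.2.2.1.arrows.getLast (edge_arrows_ne_nil x)

theorem src_firstE (x : (G.shortcut J).E) : G.src (firstE x) = x.1.1 :=
  PathG.head?_src _ (List.head?_eq_head _)

theorem tgt_lastE (x : (G.shortcut J).E) : G.tgt (lastE x) = x.2.1.1 :=
  PathG.getLast?_tgt _ (List.getLast?_eq_getLast _)

theorem edge_chain_comp (x : (G.shortcut J).E) :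
    List.Chain' (fun e f => G.tgt e = G.src f) x.2.2.1.arrows :=
  PathG.chain'_comp _

theorem edge_chain_nr (x : (G.shortcut J).E) :
    List.Chain' (fun e f => (e, f) ∉ G.rel) x.2.2.1.arrows :=
  (not_lrel_iff_chain' _).mp x.2.2.2.2.2

theorem edge_mids_notJ (x : (G.shortcut J).E) :
    ∀ v ∈ (x.2.2.1.arrows.map G.tgt).dropLast, v ∉ J := by
  have h := x.2.2.2.2.1
  rw [PathG.mids_eq] at h
  exact h

theorem fwd_unique' (hG : G.IsGentle) (J : Set G.V) (l l' : List G.E)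
    (hne : l ≠ []) (hne' : l' ≠ []) (hh : l.head? = l'.head?)
    (hc : List.Chain' (fun e f => G.tgt e = G.src f) l)
    (hc' : List.Chain' (fun e f => G.tgt e = G.src f) l')
    (hr : List.Chain' (fun e f => (e, f) ∉ G.rel) l)
    (hr' : List.Chain' (fun e f => (e, f) ∉ G.rel) l')
    (hm : ∀ x ∈ (l.map G.tgt).dropLast, x ∉ J)
    (hm' : ∀ x ∈ (l'.map G.tgt).dropLast, x ∉ J)
    (he : ∀ x, l.getLast? = some x → G.tgt x ∈ J)
    (he' : ∀ x, l'.getLast? = some x → G.tgt x ∈ J) : l = l' := by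
  cases l with
  | nil => exact absurd rfl hne
  | cons a t =>
    cases l' with
    | nil => exact absurd rfl hne'
    | cons a' t' =>
      simp only [List.head?_cons, Option.some.injEq] at hh
      subst hh
      congr 1
      exact fwd_unique hG J t t' a hc hc' hr hr' hm hm'
        (he _ (List.getLast?_eq_getLast (by simp)))
        (he' _ (List.getLast?_eq_getLast (by simp)))

theorem bwd_unique' (hG : G.IsGentle) (J : Set G.V) (l l' : List G.E)
    (hne : l ≠ []) (hne' : l' ≠ []) (hh : l.getLast? = l'.getLast?)
    (hc : List.Chain' (fun e f => G.tgt e = G.src f) l)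
    (hc' : List.Chain' (fun e f => G.tgt e = G.src f) l')
    (hr : List.Chain' (fun e f => (e, f) ∉ G.rel) l)
    (hr' : List.Chain' (fun e f => (e, f) ∉ G.rel) l')
    (hm : ∀ x ∈ (l.map G.tgt).dropLast, x ∉ J)
    (hm' : ∀ x ∈ (l'.map G.tgt).dropLast, x ∉ J)
    (he : ∀ x, l.head? = some x → G.src x ∈ J)
    (he' : ∀ x, l'.head? = some x → G.src x ∈ J) : l = l' := by
  rcases l.eq_nil_or_concat with rfl | ⟨m, a, rfl⟩
  · exact absurd rfl hne
  rcases l'.eq_nil_or_concat with rfl | ⟨m', a', rfl⟩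
  · exact absurd rfl hne'
  simp only [List.concat_eq_append] at *
  rw [List.getLast?_concat, List.getLast?_concat] at hh
  simp only [Option.some.injEq] at hh
  subst hh
  congr 1
  refine bwd_unique hG J m m' a hc hc' hr hr' ?_ ?_ ?_ ?_
  · intro x hx
    apply hm x
    simp only [List.map_append, List.map_cons, List.map_nil, List.dropLast_concat]
    exact hx
  · intro x hx
    apply hm' x
    simp only [List.map_append, List.map_cons, List.map_nil, List.dropLast_concat]
    exact hx
  · exact he _ (List.head?_eq_head _)
  · exact he' _ (List.head?_eq_head _)

theorem edge_eq_of_first (hG : G.IsGentle) (x y : (G.shortcut J).E)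
    (hs : x.1 = y.1) (hf : firstE x = firstE y) : x = y := by
  apply shortcut_edge_ext x y hs
  apply fwd_unique' hG J _ _ (edge_arrows_ne_nil x) (edge_arrows_ne_nil y)
  · rw [List.head?_eq_head (edge_arrows_ne_nil x), List.head?_eq_head (edge_arrows_ne_nil y)]
    exact congrArg some hf
  · exact edge_chain_comp x
  · exact edge_chain_comp y
  · exact edge_chain_nr x
  · exact edge_chain_nr y
  · exact edge_mids_notJ x
  · exact edge_mids_notJ y
  · intro z hz
    rw [PathG.getLast?_tgt _ hz]
    exact x.2.1.2
  · intro z hz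
    rw [PathG.getLast?_tgt _ hz]
    exact y.2.1.2

theorem edge_eq_of_last (hG : G.IsGentle) (x y : (G.shortcut J).E)
    (ht : x.2.1 = y.2.1) (hf : lastE x = lastE y) : x = y := by
  have harr : x.2.2.1.arrows = y.2.2.1.arrows := by
    apply bwd_unique' hG J _ _ (edge_arrows_ne_nil x) (edge_arrows_ne_nil y)
    · rw [List.getLast?_eq_getLast (edge_arrows_ne_nil x),
        List.getLast?_eq_getLast (edge_arrows_ne_nil y)]
      exact congrArg some hf
    · exact edge_chain_comp x
    · exact edge_chain_comp y
    · exact edge_chain_nr x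
    · exact edge_chain_nr y
    · exact edge_mids_notJ x
    · exact edge_mids_notJ y
    · intro z hz
      rw [PathG.head?_src _ hz]
      exact x.1.2
    · intro z hz
      rw [PathG.head?_src _ hz]
      exact y.1.2
  -- deduce source equality
  have hsrc : x.1 = y.1 := by
    apply Subtype.ext
    rw [← src_firstE x, ← src_firstE y]
    congr 1
    unfold firstE
    congr 1
  exact shortcut_edge_ext x y hsrc harr

theorem shortcut_rel_iff' (x y : (G.shortcut J).E) (h : x.2.1 = y.1) :
    ((x, y) ∈ (G.shortcut J).rel ↔ (lastE x, firstE y) ∈ G.rel) := by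
  constructor
  · rintro ⟨h', hrel⟩
    rw [hasRel_iff_lrel, PathG.arrows_concat, arrows_cast] at hrel
    rcases lrel_append_cases hrel with h1 | h1 | ⟨u, v, hu, hv, huv⟩
    · exact absurd h1 x.2.2.2.2.2
    · exact absurd h1 y.2.2.2.2.2
    · rw [List.getLast?_eq_getLast (edge_arrows_ne_nil x)] at hu
      rw [List.head?_eq_head (edge_arrows_ne_nil y)] at hv
      cases hu
      cases hv
      exact huv
  · intro hr
    refine ⟨h, ?_⟩
    rw [hasRel_iff_lrel, PathG.arrows_concat, arrows_cast]
    exact lrel_junction (List.getLast?_eq_getLast (edge_arrows_ne_nil x))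
      (List.head?_eq_head (edge_arrows_ne_nil y)) hr

theorem shortcut_isGentle (hG : G.IsGentle) : (G.shortcut J).IsGentle := by
  refine ⟨?_, ?_, ?_, ?_, ?_, ?_, ?_⟩
  · rintro r ⟨h, -⟩
    exact h
  · intro v
    apply two_transfer (f := firstE) (T := {e : G.E | G.src e = v.1})
    · intro x hx
      rw [Set.mem_setOf_eq, src_firstE]
      exact congrArg Subtype.val hx
    · intro x hx y hy hf
      exact edge_eq_of_first hG x y (hx.trans hy.symm) hf
    · exact hG.2.1 v.1
  · intro v
    apply two_transfer (f := lastE) (T := {e : G.E | G.tgt e = v.1})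
    · intro x hx
      rw [Set.mem_setOf_eq, tgt_lastE]
      exact congrArg Subtype.val hx
    · intro x hx y hy hf
      exact edge_eq_of_last hG x y (hx.trans hy.symm) hf
    · exact hG.2.2.1 v.1
  · intro x y z hxy hxz hnr1 hnr2
    apply edge_eq_of_first hG y z ((hxy : x.2.1 = y.1).symm.trans hxz)
    apply hG.2.2.2.1 (lastE x) (firstE y) (firstE z)
    · rw [tgt_lastE, src_firstE]
      exact congrArg Subtype.val (hxy : x.2.1 = y.1)
    · rw [tgt_lastE, src_firstE]
      exact congrArg Subtype.val (hxz : x.2.1 = z.1)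
    · exact fun hr => hnr1 ((shortcut_rel_iff' x y hxy).mpr hr)
    · exact fun hr => hnr2 ((shortcut_rel_iff' x z hxz).mpr hr)
  · intro x y z hxy hxz hr1 hr2
    apply edge_eq_of_first hG y z ((hxy : x.2.1 = y.1).symm.trans hxz)
    apply hG.2.2.2.2.1 (lastE x) (firstE y) (firstE z)
    · rw [tgt_lastE, src_firstE]
      exact congrArg Subtype.val (hxy : x.2.1 = y.1)
    · rw [tgt_lastE, src_firstE]
      exact congrArg Subtype.val (hxz : x.2.1 = z.1)
    · exact (shortcut_rel_iff' x y hxy).mp hr1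
    · exact (shortcut_rel_iff' x z hxz).mp hr2
  · intro x y z hxz hyz hnr1 hnr2
    apply edge_eq_of_last hG x y ((hxz : x.2.1 = z.1).trans (hyz : y.2.1 = z.1).symm)
    apply hG.2.2.2.2.2.1 (lastE x) (lastE y) (firstE z)
    · rw [tgt_lastE, src_firstE]
      exact congrArg Subtype.val (hxz : x.2.1 = z.1)
    · rw [tgt_lastE, src_firstE]
      exact congrArg Subtype.val (hyz : y.2.1 = z.1)
    · exact fun hr => hnr1 ((shortcut_rel_iff' x z hxz).mpr hr)
    · exact fun hr => hnr2 ((shortcut_rel_iff' y z hyz).mpr hr)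
  · intro x y z hxz hyz hr1 hr2
    apply edge_eq_of_last hG x y ((hxz : x.2.1 = z.1).trans (hyz : y.2.1 = z.1).symm)
    apply hG.2.2.2.2.2.2 (lastE x) (lastE y) (firstE z)
    · rw [tgt_lastE, src_firstE]
      exact congrArg Subtype.val (hxz : x.2.1 = z.1)
    · rw [tgt_lastE, src_firstE]
      exact congrArg Subtype.val (hyz : y.2.1 = z.1)
    · exact (shortcut_rel_iff' x z hxz).mp hr1
    · exact (shortcut_rel_iff' y z hyz).mp hr2

end ShortcutEdges

end QuivRel


/-! ### Path algebra lemmas -/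

namespace QuivRel

variable (k : Type) [CommRing k]
variable {G : QuivRel} [Fintype G.V]

/-- The element of the path algebra attached to an arrow. -/
noncomputable def edg (e : G.E) : Alg k G :=
  RingQuot.mkRingHom (PARel k G) (FreeAlgebra.ι k (Sum.inr e))

theorem vtx_sum_eq_one : ∑ v : G.V, vtx k G v = 1 := by
  have h := RingQuot.mkRingHom_rel (PARel.vsum (k := k) (G := G))
  rw [map_sum, map_one] at h
  exact h

theorem etgt_alg (e : G.E) : vtx k G (G.tgt e) * edg k e = edg k e := by
  have h := RingQuot.mkRingHom_rel (PARel.etgt (k := k) (G := G) e)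
  rw [map_mul] at h
  exact h

theorem esrc_alg (e : G.E) : edg k e * vtx k G (G.src e) = edg k e := by
  have h := RingQuot.mkRingHom_rel (PARel.esrc (k := k) (G := G) e)
  rw [map_mul] at h
  exact h

theorem zrel_alg {a b : G.E} (h : (a, b) ∈ G.rel) : edg k b * edg k a = 0 := by
  have h2 := RingQuot.mkRingHom_rel (PARel.zrel (k := k) (G := G) a b h)
  rw [map_mul, map_zero] at h2
  exact h2

theorem vtx_mul_edg (v : G.V) (e : G.E) :
    vtx k G v * edg k e = if v = G.tgt e then edg k e else 0 := by
  split
  case isTrue h => rw [h]; exact etgt_alg k e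
  case isFalse h => rw [← etgt_alg k e, ← mul_assoc, vtx_mul, if_neg h, zero_mul]

theorem edg_mul_vtx (e : G.E) (v : G.V) :
    edg k e * vtx k G v = if v = G.src e then edg k e else 0 := by
  split
  case isTrue h => rw [h]; exact esrc_alg k e
  case isFalse h =>
    rw [← esrc_alg k e, mul_assoc, vtx_mul, if_neg (fun hh => h hh.symm), mul_zero]

theorem edg_mul_edg_of_ne {e f : G.E} (h : G.src f ≠ G.tgt e) :
    edg k f * edg k e = 0 := by
  rw [← esrc_alg k f, ← etgt_alg k e, mul_assoc, ← mul_assoc (vtx k G (G.src f)),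
    vtx_mul, if_neg h, zero_mul, mul_zero]

/-- The element of the path algebra attached to a path. -/
noncomputable def pathProd : {a b : G.V} → PathG G a b → Alg k G
  | _, _, .nil a => vtx k G a
  | _, _, .cons p e _ _ => edg k e * pathProd p

@[simp] theorem pathProd_nil (a : G.V) :
    pathProd k (PathG.nil (G := G) a) = vtx k G a := by simp only [pathProd]

@[simp] theorem pathProd_cons {a b c : G.V} (p : PathG G a b) (e : G.E) (h₁ : G.src e = b)
    (h₂ : G.tgt e = c) : pathProd k (p.cons e h₁ h₂) = edg k e * pathProd k p := by
  simp only [pathProd]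

theorem pathProd_cast {a b b' : G.V} (h : b = b') (p : PathG G a b) :
    pathProd k (h ▸ p : PathG G a b') = pathProd k p := by cases h; rfl

theorem vtx_mul_pathProd (v : G.V) {a b : G.V} (p : PathG G a b) :
    vtx k G v * pathProd k p = if v = b then pathProd k p else 0 := by
  induction p with
  | nil =>
    rw [pathProd_nil, vtx_mul]
    by_cases h : v = a
    · rw [if_pos h, if_pos h, h]
    · rw [if_neg h, if_neg h]
  | cons p e h₁ h₂ ih =>
    rw [pathProd_cons, ← mul_assoc, vtx_mul_edg, h₂]
    split
    · rfl
    · rw [zero_mul]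

theorem pathProd_mul_vtx {a b : G.V} (p : PathG G a b) (v : G.V) :
    pathProd k p * vtx k G v = if v = a then pathProd k p else 0 := by
  induction p with
  | nil => rw [pathProd_nil, vtx_mul]; simp [eq_comm]
  | cons p e h₁ h₂ ih =>
    rw [pathProd_cons, mul_assoc, ih]
    split
    · rfl
    · rw [mul_zero]

theorem pathProd_concat {a b c : G.V} (p : PathG G a b) (q : PathG G b c) :
    pathProd k (p.concat q) = pathProd k q * pathProd k p := by
  induction q with
  | nil =>
    rw [PathG.concat_nil, pathProd_nil, vtx_mul_pathProd, if_pos rfl]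
  | cons q e h₁ h₂ ih =>
    rw [PathG.concat_cons, pathProd_cons, pathProd_cons, ih, mul_assoc]

theorem pathProd_zero_of_hasRel {a b : G.V} (p : PathG G a b) (h : G.HasRel p) :
    pathProd k p = 0 := by
  induction p with
  | nil =>
    obtain ⟨l₁, x, y, l₂, heq, -⟩ := h
    rw [PathG.arrows_nil] at heq
    exact absurd heq (by simp)
  | cons p e h₁ h₂ ih =>
    rw [hasRel_iff_lrel, PathG.arrows_cons] at h
    rcases lrel_append_cases h with h1 | h1 | ⟨u, v, hu, hv, huv⟩
    · rw [pathProd_cons, ih h1, mul_zero]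
    · obtain ⟨l₁, x, y, l₂, heq, -⟩ := h1
      apply_fun List.length at heq
      simp at heq
      omega
    · simp only [List.head?_cons, Option.some.injEq] at hv
      subst hv
      cases p with
      | nil => simp at hu
      | cons p' f g₁ g₂ =>
        rw [PathG.arrows_cons, List.getLast?_concat] at hu
        cases hu
        rw [pathProd_cons, pathProd_cons, ← mul_assoc, zrel_alg k huv, zero_mul]

theorem vtxSum_mul_pathProd (J : Set G.V) [Fintype J] {a b : G.V} (p : PathG G a b) :
    vtxSum k G J * pathProd k p = if b ∈ J then pathProd k p else 0 := by
  unfold vtxSum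
  rw [Finset.sum_mul]
  by_cases hb : b ∈ J
  · rw [if_pos hb, Finset.sum_eq_single (⟨b, hb⟩ : J)]
    · rw [vtx_mul_pathProd, if_pos rfl]
    · intro j _ hj
      rw [vtx_mul_pathProd, if_neg (fun he => hj (Subtype.ext he))]
    · intro hmem
      exact absurd (Finset.mem_univ _) hmem
  · rw [if_neg hb]
    apply Finset.sum_eq_zero
    intro j _
    rw [vtx_mul_pathProd, if_neg (fun (he : j.1 = b) => hb (he ▸ j.2))]

theorem pathProd_mul_vtxSum (J : Set G.V) [Fintype J] {a b : G.V} (p : PathG G a b) :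
    pathProd k p * vtxSum k G J = if a ∈ J then pathProd k p else 0 := by
  unfold vtxSum
  rw [Finset.mul_sum]
  by_cases ha : a ∈ J
  · rw [if_pos ha, Finset.sum_eq_single (⟨a, ha⟩ : J)]
    · rw [pathProd_mul_vtx, if_pos rfl]
    · intro j _ hj
      rw [pathProd_mul_vtx, if_neg (fun he => hj (Subtype.ext he))]
    · intro hmem
      exact absurd (Finset.mem_univ _) hmem
  · rw [if_neg ha]
    apply Finset.sum_eq_zero
    intro j _
    rw [pathProd_mul_vtx, if_neg (fun (he : j.1 = a) => ha (he ▸ j.2))]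

end QuivRel


/-! ### The algebra map from the shortcut algebra to the corner algebra -/

/-- The valuation of the corner ring, as an additive map. -/
def cornerVal {R : Type} [Ring R] {e : R} {he : e * e = e} : Corner e he →+ R where
  toFun x := x.1
  map_zero' := rfl
  map_add' _ _ := rfl

@[simp] theorem cornerVal_apply {R : Type} [Ring R] {e : R} {he : e * e = e}
    (x : Corner e he) : cornerVal x = x.1 := rfl

@[simp] theorem corner_mul_val {R : Type} [Ring R] {e : R} {he : e * e = e}
    (x y : Corner e he) : (x * y).1 = x.1 * y.1 := rfl

@[simp] theorem corner_zero_val {R : Type} [Ring R] {e : R} {he : e * e = e} :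
    (0 : Corner e he).1 = 0 := rfl

@[simp] theorem corner_one_val {R : Type} [Ring R] {e : R} {he : e * e = e} :
    (1 : Corner e he).1 = e := rfl

@[simp] theorem corner_add_val {R : Type} [Ring R] {e : R} {he : e * e = e}
    (x y : Corner e he) : (x + y).1 = x.1 + y.1 := rfl

@[simp] theorem corner_smul_val {R k : Type} [Ring R] [CommRing k] [Algebra k R] {e : R}
    {he : e * e = e} (c : k) (x : Corner e he) : (c • x).1 = c • x.1 := rfl

namespace QuivRel

variable (k : Type) [CommRing k]
variable {G : QuivRel} [Fintype G.V] (J : Set G.V) [Fintype J]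

theorem vtx_eq_mkAlgHom (v : G.V) :
    vtx k G v = RingQuot.mkAlgHom k (PARel k G) (FreeAlgebra.ι k (Sum.inl v)) := by
  unfold vtx
  rw [← RingQuot.mkAlgHom_coe k]
  rfl

theorem edg_eq_mkAlgHom (e : G.E) :
    edg k e = RingQuot.mkAlgHom k (PARel k G) (FreeAlgebra.ι k (Sum.inr e)) := by
  unfold edg
  rw [← RingQuot.mkAlgHom_coe k]
  rfl

/-- The corner element attached to a path with endpoints in `J`. -/
noncomputable def cornerOf {a b : G.V} (ha : a ∈ J) (hb : b ∈ J) (p : PathG G a b) :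
    Corner (vtxSum k G J) (vtxSum_idem k G J) :=
  ⟨pathProd k p, by rw [vtxSum_mul_pathProd, if_pos hb], by rw [pathProd_mul_vtxSum, if_pos ha]⟩

@[simp] theorem cornerOf_val {a b : G.V} (ha : a ∈ J) (hb : b ∈ J) (p : PathG G a b) :
    (cornerOf k J ha hb p).1 = pathProd k p := rfl

/-- The underlying map on generators for `phi`. -/
noncomputable def phiBase : FreeAlgebra k ((G.shortcut J).V ⊕ (G.shortcut J).E) →ₐ[k]
    Corner (vtxSum k G J) (vtxSum_idem k G J) :=
  FreeAlgebra.lift k (Sum.elim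
    (fun v => cornerOf k J v.2 v.2 (PathG.nil v.1))
    (fun s => cornerOf k J s.1.2 s.2.1.2 s.2.2.1))

@[simp] theorem phiBase_inl (v : (G.shortcut J).V) :
    phiBase k J (FreeAlgebra.ι k (Sum.inl v)) = cornerOf k J v.2 v.2 (PathG.nil v.1) := by
  simp [phiBase]

@[simp] theorem phiBase_inr (s : (G.shortcut J).E) :
    phiBase k J (FreeAlgebra.ι k (Sum.inr s)) = cornerOf k J s.1.2 s.2.1.2 s.2.2.1 := by
  simp [phiBase]

theorem phiBase_rel : ∀ ⦃x y⦄, PARel k (G.shortcut J) x y → phiBase k J x = phiBase k J y := by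
  intro x y h
  cases h with
  | vmul v w =>
    rw [map_mul, phiBase_inl, phiBase_inl, apply_ite (phiBase k J), map_zero, phiBase_inl]
    apply Subtype.ext
    erw [apply_ite Subtype.val]
    simp only [corner_mul_val, corner_zero_val, cornerOf_val, pathProd_nil]
    rw [vtx_mul]
    by_cases h : v = w
    · rw [if_pos (congrArg Subtype.val h), if_pos h]
    · rw [if_neg (fun hh => h (Subtype.ext hh)), if_neg h]
  | vsum =>
    rw [map_sum, map_one]
    apply Subtype.ext
    have hms := map_sum (cornerVal (e := vtxSum k G J) (he := vtxSum_idem k G J))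
      (fun v : (G.shortcut J).V => phiBase k J (FreeAlgebra.ι k (Sum.inl v))) Finset.univ
    simp only [cornerVal_apply] at hms
    rw [hms]
    simp only [phiBase_inl, cornerOf_val, pathProd_nil, corner_one_val]
    rfl
  | etgt e =>
    rw [map_mul, phiBase_inl, phiBase_inr]
    apply Subtype.ext
    simp only [corner_mul_val, cornerOf_val, pathProd_nil]
    rw [vtx_mul_pathProd]
    exact if_pos rfl
  | esrc e =>
    rw [map_mul, phiBase_inr, phiBase_inl]
    apply Subtype.ext
    simp only [corner_mul_val, cornerOf_val, pathProd_nil]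
    rw [pathProd_mul_vtx]
    exact if_pos rfl
  | zrel a b hr =>
    rw [map_mul, map_zero, phiBase_inr, phiBase_inr]
    apply Subtype.ext
    simp only [corner_mul_val, corner_zero_val, cornerOf_val]
    obtain ⟨hc, hrel⟩ := hr
    show pathProd k b.2.2.1 * pathProd k a.2.2.1 = 0
    rw [← pathProd_cast k (congrArg Subtype.val hc) a.2.2.1, ← pathProd_concat]
    exact pathProd_zero_of_hasRel k _ hrel

/-- The algebra map from the shortcut path algebra to the corner algebra. -/
noncomputable def phi : Alg k (G.shortcut J) →ₐ[k]
    Corner (vtxSum k G J) (vtxSum_idem k G J) :=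
  RingQuot.liftAlgHom k ⟨phiBase k J, phiBase_rel k J⟩

@[simp] theorem phi_vtx (j : (G.shortcut J).V) :
    phi k J (vtx k (G.shortcut J) j) = cornerOf k J j.2 j.2 (PathG.nil j.1) := by
  rw [phi, vtx_eq_mkAlgHom, RingQuot.liftAlgHom_mkAlgHom_apply, phiBase_inl]

@[simp] theorem phi_edg (s : (G.shortcut J).E) :
    phi k J (edg k s) = cornerOf k J s.1.2 s.2.1.2 s.2.2.1 := by
  rw [phi, edg_eq_mkAlgHom, RingQuot.liftAlgHom_mkAlgHom_apply, phiBase_inr]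

end QuivRel


/-! ### The representation used to invert `phi` -/

namespace QuivRel

/-- Slots of the module: a starting vertex in `J`, and a relation-free path from it with no
internal vertex in `J`. -/
structure MSlot (G : QuivRel) (J : Set G.V) where
  j : J
  v : G.V
  q : PathG G j.1 v
  hrel : ¬ G.HasRel q
  hmids : ∀ x ∈ q.mids, x ∉ J

variable {G : QuivRel}

theorem mslot_eq {J : Set G.V} {j : J} {v : G.V} {q q' : PathG G j.1 v} (h : q = q')
    {h1 h2 h1' h2'} : (⟨j, v, q, h1, h2⟩ : MSlot G J) = ⟨j, v, q', h1', h2'⟩ := by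
  cases h; rfl

theorem not_hasRel_nil (a : G.V) : ¬ G.HasRel (PathG.nil a) := by
  rintro ⟨l₁, x, y, l₂, heq, -⟩
  rw [PathG.arrows_nil] at heq
  exact absurd heq (by simp)

theorem not_hasRel_single {a c : G.V} (f : G.E) (h1 : G.src f = a) (h2 : G.tgt f = c) :
    ¬ G.HasRel ((PathG.nil a).cons f h1 h2) := by
  rintro ⟨l₁, x, y, l₂, heq, -⟩
  rw [PathG.arrows_cons, PathG.arrows_nil] at heq
  apply_fun List.length at heq
  simp at heq
  omega

theorem hasRel_of_hasRel_pre {a b c : G.V} {q : PathG G a b} (f : G.E) (h1 : G.src f = b)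
    (h2 : G.tgt f = c) (h : G.HasRel q) : G.HasRel (q.cons f h1 h2) := by
  rw [hasRel_iff_lrel, PathG.arrows_cons]
  exact lrel_append_left h

theorem hasRel_snoc_iff {a b c : G.V} (q : PathG G a b) (hq : ¬ G.HasRel q)
    (hne : q.arrows ≠ []) (f : G.E) (h1 : G.src f = b) (h2 : G.tgt f = c) :
    G.HasRel (q.cons f h1 h2) ↔ (q.arrows.getLast hne, f) ∈ G.rel := by
  rw [hasRel_iff_lrel, PathG.arrows_cons]
  constructor
  · intro h
    rcases lrel_append_cases h with h' | h' | ⟨u, w, hu, hw, huw⟩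
    · exact absurd h' hq
    · obtain ⟨l₁, x, y, l₂, heq, -⟩ := h'
      apply_fun List.length at heq
      simp at heq
      omega
    · simp only [List.head?_cons, Option.some.injEq] at hw
      subst hw
      rw [List.getLast?_eq_getLast hne] at hu
      cases hu
      exact huw
  · intro h
    exact lrel_junction (List.getLast?_eq_getLast hne) (by simp) h

/-- Shortcut arrow attached to a slot whose endpoint lies in `J`. -/
def MSlot.toEdge {J : Set G.V} (σ : MSlot G J) (hv : σ.v ∈ J) (hl : 0 < σ.q.length) :
    (G.shortcut J).E :=
  ⟨σ.j, ⟨σ.v, hv⟩, σ.q, hl, σ.hmids, σ.hrel⟩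

section ModuleM

variable (k : Type) [CommRing k]
variable [Fintype G.V] (J : Set G.V) [Fintype J]

/-- The action of a vertex idempotent on the module. -/
noncomputable def actV (v : G.V) :
    (MSlot G J →₀ Alg k (G.shortcut J)) →ₗ[k] (MSlot G J →₀ Alg k (G.shortcut J)) :=
  Finsupp.lsum k (fun σ => if σ.v = v then Finsupp.lsingle σ else 0)

/-- One step of the action of an arrow on a slot. -/
noncomputable def stepSlot (f : G.E) :
    MSlot G J → Alg k (G.shortcut J) →ₗ[k] (MSlot G J →₀ Alg k (G.shortcut J))
  | ⟨j, v, q, h1, h2⟩ =>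
    if hv : G.src f = v then
      (if hrel : G.HasRel (q.cons f hv rfl) then 0
       else if hres : v ∈ J ∧ 0 < q.length then
         (Finsupp.lsingle
           (⟨⟨v, hres.1⟩, G.tgt f, (PathG.nil v).cons f hv rfl,
             not_hasRel_single f hv rfl, by simp⟩ : MSlot G J)).comp
           (LinearMap.mulLeft k
             (edg k (⟨j, ⟨v, hres.1⟩, q, hres.2, h2, h1⟩ : (G.shortcut J).E)))
       else Finsupp.lsingle
         (⟨j, G.tgt f, q.cons f hv rfl, hrel, by
            intro x hx
            rw [PathG.mids_cons] at hx
            rcases List.mem_append.mp hx with h | h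
            · exact h2 x h
            · split at h
              · simp at h
              · simp only [List.mem_singleton] at h
                subst h
                intro hvJ
                exact hres ⟨hvJ, by omega⟩⟩ : MSlot G J))
    else 0

/-- The action of an arrow on the module. -/
noncomputable def actE (f : G.E) :
    (MSlot G J →₀ Alg k (G.shortcut J)) →ₗ[k] (MSlot G J →₀ Alg k (G.shortcut J)) :=
  Finsupp.lsum k (stepSlot k J f)

theorem actV_single (v : G.V) (σ : MSlot G J) (x : Alg k (G.shortcut J)) :
    actV k J v (Finsupp.single σ x) = if σ.v = v then Finsupp.single σ x else 0 := by
  unfold actV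
  rw [Finsupp.lsum_single]
  split_ifs with h
  · rfl
  · rfl

theorem actE_single (f : G.E) (σ : MSlot G J) (x : Alg k (G.shortcut J)) :
    actE k J f (Finsupp.single σ x) = stepSlot k J f σ x := by
  unfold actE
  rw [Finsupp.lsum_single]

/-- The underlying map on generators for `theta`. -/
noncomputable def thetaBase : FreeAlgebra k (G.V ⊕ G.E) →ₐ[k]
    Module.End k (MSlot G J →₀ Alg k (G.shortcut J)) :=
  FreeAlgebra.lift k (Sum.elim (actV k J) (actE k J))

@[simp] theorem thetaBase_inl (v : G.V) :
    thetaBase k J (FreeAlgebra.ι k (Sum.inl v)) = actV k J v := by simp [thetaBase]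

@[simp] theorem thetaBase_inr (f : G.E) :
    thetaBase k J (FreeAlgebra.ι k (Sum.inr f)) = actE k J f := by simp [thetaBase]

theorem thetaBase_rel : ∀ ⦃x y⦄, PARel k G x y → thetaBase k J x = thetaBase k J y := by
  intro x y h
  cases h with
  | vmul v w =>
    rw [map_mul, thetaBase_inl, thetaBase_inl, apply_ite (thetaBase k J), map_zero,
      thetaBase_inl]
    apply Finsupp.lhom_ext
    intro σ x
    rw [Module.End.mul_apply, actV_single]
    by_cases hw : σ.v = w
    · rw [if_pos hw, actV_single]
      by_cases hvw : v = w
      · rw [if_pos hvw, if_pos (hw.trans hvw.symm), actV_single, if_pos (hw.trans hvw.symm)]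
      · rw [if_neg (fun (hh : σ.v = v) => hvw (hh ▸ hw)), if_neg hvw, LinearMap.zero_apply]
    · rw [if_neg hw, map_zero]
      by_cases hvw : v = w
      · rw [if_pos hvw, actV_single, if_neg (fun hh => hw (hh.trans hvw))]
      · rw [if_neg hvw, LinearMap.zero_apply]
  | vsum =>
    rw [map_sum, map_one]
    apply Finsupp.lhom_ext
    intro σ x
    rw [LinearMap.sum_apply]
    simp only [thetaBase_inl]
    rw [Module.End.one_apply]
    have hcong : ∀ v ∈ Finset.univ, actV k J v (Finsupp.single σ x)
        = if σ.v = v then Finsupp.single σ x else 0 := fun v _ => actV_single k J v σ x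
    rw [Finset.sum_congr rfl hcong, Finset.sum_ite_eq Finset.univ σ.v
      (fun _ => Finsupp.single σ x), if_pos (Finset.mem_univ _)]
  | etgt f =>
    rw [map_mul, thetaBase_inl, thetaBase_inr]
    apply Finsupp.lhom_ext
    intro σ x
    obtain ⟨j, v, q, hq1, hq2⟩ := σ
    rw [Module.End.mul_apply, actE_single]
    simp only [stepSlot]
    split_ifs with hv hrel hres
    · rw [LinearMap.zero_apply, map_zero]
    · simp only [LinearMap.comp_apply, LinearMap.mulLeft_apply, Finsupp.lsingle_apply]
      rw [actV_single]
      simp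
    · rw [Finsupp.lsingle_apply, actV_single]
      simp
    · rw [LinearMap.zero_apply, map_zero]
  | esrc f =>
    rw [map_mul, thetaBase_inr, thetaBase_inl]
    apply Finsupp.lhom_ext
    intro σ x
    rw [Module.End.mul_apply, actV_single]
    by_cases h : σ.v = G.src f
    · rw [if_pos h]
    · rw [if_neg h, map_zero, actE_single]
      obtain ⟨j, v, q, hq1, hq2⟩ := σ
      simp only [stepSlot]
      rw [dif_neg (fun hh : G.src f = v => h hh.symm), LinearMap.zero_apply]
  | zrel a b hr =>
    rw [map_mul, map_zero, thetaBase_inr, thetaBase_inr]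
    apply Finsupp.lhom_ext
    intro σ x
    obtain ⟨j, v, q, hq1, hq2⟩ := σ
    rw [Module.End.mul_apply, actE_single, LinearMap.zero_apply]
    simp only [stepSlot]
    split_ifs with hv hrel hres
    · rw [LinearMap.zero_apply, map_zero]
    · simp only [LinearMap.comp_apply, LinearMap.mulLeft_apply, Finsupp.lsingle_apply]
      rw [actE_single]
      simp only [stepSlot]
      split_ifs with hv2 hrel2 hres2
      · rw [LinearMap.zero_apply]
      · exact absurd ⟨[], a, b, [], by simp, hr⟩ hrel2
      · exact absurd ⟨[], a, b, [], by simp, hr⟩ hrel2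
      · rfl
    · rw [Finsupp.lsingle_apply, actE_single]
      simp only [stepSlot]
      split_ifs with hv2 hrel2 hres2
      · rw [LinearMap.zero_apply]
      · exact absurd ⟨q.arrows, a, b, [], by simp, hr⟩ hrel2
      · exact absurd ⟨q.arrows, a, b, [], by simp, hr⟩ hrel2
      · rfl
    · rw [LinearMap.zero_apply, map_zero]

/-- The representation of the big path algebra. -/
noncomputable def theta : Alg k G →ₐ[k]
    Module.End k (MSlot G J →₀ Alg k (G.shortcut J)) :=
  RingQuot.liftAlgHom k ⟨thetaBase k J, thetaBase_rel k J⟩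

@[simp] theorem theta_vtx (v : G.V) : theta k J (vtx k G v) = actV k J v := by
  rw [theta, vtx_eq_mkAlgHom, RingQuot.liftAlgHom_mkAlgHom_apply, thetaBase_inl]

@[simp] theorem theta_edg (f : G.E) : theta k J (edg k f) = actE k J f := by
  rw [theta, edg_eq_mkAlgHom, RingQuot.liftAlgHom_mkAlgHom_apply, thetaBase_inr]

end ModuleM

end QuivRel


/-! ### Evaluation and the key identity -/

namespace QuivRel

variable {G : QuivRel}

theorem mids_concat_right {a b c : G.V} (p : PathG G a b) (q : PathG G b c) :
    ∀ x ∈ q.mids, x ∈ (p.concat q).mids := by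
  induction q with
  | nil => intro x hx; simp at hx
  | cons q' f h₁ h₂ ih =>
    intro x hx
    rw [PathG.mids_cons] at hx
    rw [PathG.concat_cons, PathG.mids_cons]
    rcases List.mem_append.mp hx with h | h
    · exact List.mem_append.mpr (Or.inl (ih x h))
    · split at h
      · simp at h
      · case _ hq' =>
        refine List.mem_append.mpr (Or.inr ?_)
        rw [if_neg (by rw [PathG.length_concat]; omega)]
        exact h

theorem mid_mem_concat {a b c : G.V} (p : PathG G a b) (q : PathG G b c)
    (hp : 0 < p.length) (hq : 0 < q.length) : b ∈ (p.concat q).mids := by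
  induction q with
  | nil => simp at hq
  | cons q' f h₁ h₂ ih =>
    rw [PathG.concat_cons, PathG.mids_cons]
    by_cases h0 : 0 < q'.length
    · exact List.mem_append.mpr (Or.inl (ih h0))
    · have hb := PathG.eq_of_length_zero q' (by omega)
      refine List.mem_append.mpr (Or.inr ?_)
      rw [if_neg (by rw [PathG.length_concat]; omega)]
      rw [List.mem_singleton]
      exact hb

theorem decomp_first {a b : G.V} (p : PathG G a b) (hp : 0 < p.length) :
    ∃ (c : G.V) (f : G.E) (hf : G.src f = a) (hc : G.tgt f = c) (rest : PathG G c b),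
      p = ((PathG.nil a).cons f hf hc).concat rest := by
  induction p with
  | nil => simp at hp
  | cons p' g h₁ h₂ ih =>
    subst h₂
    by_cases h0 : 0 < p'.length
    · obtain ⟨c, f, hf, hc, rest, hre⟩ := ih h0
      exact ⟨c, f, hf, hc, rest.cons g h₁ rfl, by rw [PathG.concat_cons, ← hre]⟩
    · cases p' with
      | nil => exact ⟨G.tgt g, g, h₁, rfl, PathG.nil _, (PathG.concat_nil _).symm⟩
      | cons p'' g' h₁' h₂' => simp at h0

section CprimeSection

variable (k : Type) [CommRing k]
variable [Fintype G.V] (J : Set G.V) [Fintype J]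

/-- The weight of a slot used in the evaluation map. -/
noncomputable def slotWt (σ : MSlot G J) : Alg k (G.shortcut J) :=
  if hl : 0 < σ.q.length then
    (if hv : σ.v ∈ J then edg k (σ.toEdge hv hl) else 0)
  else vtx k (G.shortcut J) σ.j

theorem slotWt_nil (j : J) (h1 h2) :
    slotWt k J (⟨j, j.1, PathG.nil j.1, h1, h2⟩ : MSlot G J) = vtx k (G.shortcut J) j := by
  unfold slotWt
  split_ifs with h h'
  · exact absurd h (by simp)
  · exact absurd h (by simp)
  · rfl

theorem slotWt_pos {j : J} {v : G.V} {q : PathG G j.1 v} (hl : 0 < q.length) (hv : v ∈ J)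
    (h1 : ¬ G.HasRel q) (h2 : ∀ x ∈ q.mids, x ∉ J) :
    slotWt k J (⟨j, v, q, h1, h2⟩ : MSlot G J)
      = edg k (⟨j, ⟨v, hv⟩, q, hl, h2, h1⟩ : (G.shortcut J).E) := by
  unfold slotWt
  rw [dif_pos hl, dif_pos hv]
  rfl

/-- The evaluation map of the module. -/
noncomputable def eps : (MSlot G J →₀ Alg k (G.shortcut J)) →ₗ[k] Alg k (G.shortcut J) :=
  Finsupp.lsum k (fun σ => LinearMap.mulLeft k (slotWt k J σ))

theorem eps_single (σ : MSlot G J) (x : Alg k (G.shortcut J)) :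
    eps k J (Finsupp.single σ x) = slotWt k J σ * x := by
  unfold eps
  rw [Finsupp.lsum_single]
  rfl

/-- Trivial slot at a vertex of `J`. -/
def trivSlot (j : J) : MSlot G J :=
  ⟨j, j.1, PathG.nil j.1, not_hasRel_nil _, by simp⟩

/-- The cyclic element of the module. -/
noncomputable def uElt : MSlot G J →₀ Alg k (G.shortcut J) :=
  ∑ j : J, Finsupp.single (trivSlot J j) 1

/- computation lemmas for the actions on explicit slots -/

theorem actV_slot (w : G.V) (j : J) (v : G.V) (q : PathG G j.1 v) (h1 h2)
    (x : Alg k (G.shortcut J)) :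
    actV k J w (Finsupp.single (⟨j, v, q, h1, h2⟩ : MSlot G J) x)
      = if v = w then Finsupp.single (⟨j, v, q, h1, h2⟩ : MSlot G J) x else 0 := by
  rw [actV_single]

theorem stepSlot_ne (f : G.E) (j : J) (v : G.V) (q : PathG G j.1 v) (h1 h2)
    (hne : G.src f ≠ v) (x : Alg k (G.shortcut J)) :
    stepSlot k J f (⟨j, v, q, h1, h2⟩ : MSlot G J) x = 0 := by
  simp only [stepSlot]
  rw [dif_neg hne]
  rfl

theorem stepSlot_rel (f : G.E) (j : J) (v : G.V) (q : PathG G j.1 v) (h1 h2)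
    (hsf : G.src f = v) (hrel : G.HasRel (q.cons f hsf rfl)) (x : Alg k (G.shortcut J)) :
    stepSlot k J f (⟨j, v, q, h1, h2⟩ : MSlot G J) x = 0 := by
  simp only [stepSlot]
  rw [dif_pos hsf, dif_pos hrel]
  rfl

theorem stepSlot_reset (f : G.E) (j : J) (v : G.V) (q : PathG G j.1 v) (h1 h2)
    (hsf : G.src f = v) (hnorel : ¬ G.HasRel (q.cons f hsf rfl)) (hvJ : v ∈ J)
    (hql : 0 < q.length) (pf1 pf2) (x : Alg k (G.shortcut J)) :
    stepSlot k J f (⟨j, v, q, h1, h2⟩ : MSlot G J) x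
      = Finsupp.single
          (⟨⟨v, hvJ⟩, G.tgt f, (PathG.nil v).cons f hsf rfl, pf1, pf2⟩ : MSlot G J)
          (edg k (⟨j, ⟨v, hvJ⟩, q, hql, h2, h1⟩ : (G.shortcut J).E) * x) := by
  simp only [stepSlot]
  rw [dif_pos hsf, dif_neg hnorel, dif_pos ⟨hvJ, hql⟩]
  rfl

theorem stepSlot_ext (f : G.E) (j : J) (v : G.V) (q : PathG G j.1 v) (h1 h2)
    (hsf : G.src f = v) (hnorel : ¬ G.HasRel (q.cons f hsf rfl))
    (hnres : ¬ (v ∈ J ∧ 0 < q.length)) (pf1 pf2) (x : Alg k (G.shortcut J)) :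
    stepSlot k J f (⟨j, v, q, h1, h2⟩ : MSlot G J) x
      = Finsupp.single (⟨j, G.tgt f, q.cons f hsf rfl, pf1, pf2⟩ : MSlot G J) x := by
  simp only [stepSlot]
  rw [dif_pos hsf, dif_neg hnorel, dif_neg hnres]
  rfl

/-- The key chain computation: acting by a path on a compatible slot. -/
theorem theta_chain {a₀ b₀ : G.V} (p : PathG G a₀ b₀) :
    ∀ (j : J) (t : PathG G j.1 a₀) (ht : ¬ G.HasRel t) (htm : ∀ x ∈ t.mids, x ∉ J)
      (hrel : ¬ G.HasRel (t.concat p)) (hmids : ∀ x ∈ (t.concat p).mids, x ∉ J)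
      (x : Alg k (G.shortcut J)),
      theta k J (pathProd k p) (Finsupp.single (⟨j, a₀, t, ht, htm⟩ : MSlot G J) x)
        = Finsupp.single (⟨j, b₀, t.concat p, hrel, hmids⟩ : MSlot G J) x := by
  induction p with
  | nil =>
    intro j t ht htm hrel hmids x
    rw [pathProd_nil, theta_vtx, actV_slot, if_pos rfl]
    exact congrArg (fun s => Finsupp.single s x) (mslot_eq (PathG.concat_nil t).symm)
  | cons p' f h₁ h₂ ih =>
    intro j t ht htm hrel hmids x
    subst h₂
    rw [pathProd_cons, map_mul, Module.End.mul_apply]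
    have hrel' : ¬ G.HasRel (t.concat p') := fun hh => hrel (by
      rw [PathG.concat_cons]
      exact hasRel_of_hasRel_pre f h₁ rfl hh)
    have hmids' : ∀ x ∈ (t.concat p').mids, x ∉ J := by
      intro y hy
      apply hmids y
      rw [PathG.concat_cons, PathG.mids_cons]
      exact List.mem_append.mpr (Or.inl hy)
    rw [ih j t ht htm hrel' hmids' x, theta_edg, actE_single]
    have hnr : ¬ G.HasRel ((t.concat p').cons f h₁ rfl) := by
      rw [← PathG.concat_cons]
      exact hrel
    rw [stepSlot_ext k J f j _ (t.concat p') hrel' hmids' h₁ hnr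
      (by
        rintro ⟨hvJ, hlen⟩
        refine hmids _ ?_ hvJ
        rw [PathG.concat_cons, PathG.mids_cons]
        refine List.mem_append.mpr (Or.inr ?_)
        rw [if_neg (by omega : ¬ (t.concat p').length = 0)]
        simp)
      (by rw [← PathG.concat_cons]; exact hrel)
      (by rw [← PathG.concat_cons]; exact hmids) x]
    refine congrArg (fun s => Finsupp.single s x) ?_
    exact mslot_eq (by rw [PathG.concat_cons])

/-- The key commutation predicate. -/
def IsCp (z : Alg k (G.shortcut J)) : Prop :=
  ∀ (σ : MSlot G J), σ.v ∈ J → ∀ x,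
    eps k J (theta k J (phi k J z).1 (Finsupp.single σ x))
      = z * eps k J (Finsupp.single σ x)

theorem isCp_ext {z : Alg k (G.shortcut J)} (hz : IsCp k J z)
    (m : MSlot G J →₀ Alg k (G.shortcut J)) (hm : ∀ σ ∈ m.support, σ.v ∈ J) :
    eps k J (theta k J (phi k J z).1 m) = z * eps k J m := by
  conv_lhs => rw [← Finsupp.sum_single m]
  conv_rhs => rw [← Finsupp.sum_single m]
  rw [map_finsuppSum, map_finsuppSum, map_finsuppSum, Finsupp.mul_sum]
  apply Finsupp.sum_congr
  intro σ hσ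
  exact hz σ (hm σ hσ) (m σ)

theorem actV_apply_of_ne (v : G.V) (m : MSlot G J →₀ Alg k (G.shortcut J)) (σ : MSlot G J)
    (h : σ.v ≠ v) : (actV k J v m) σ = 0 := by
  induction m using Finsupp.induction_linear with
  | zero => rw [map_zero]; rfl
  | add f g hf hg => rw [map_add, Finsupp.add_apply, hf, hg, add_zero]
  | single τ x =>
    rw [actV_single]
    split_ifs with hτ
    · exact Finsupp.single_eq_of_ne (fun he => h (he ▸ hτ))
    · rfl

theorem theta_vtxSum_apply_notJ (m : MSlot G J →₀ Alg k (G.shortcut J)) (σ : MSlot G J)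
    (hσ : σ.v ∉ J) : (theta k J (vtxSum k G J) m) σ = 0 := by
  unfold vtxSum
  rw [map_sum, LinearMap.sum_apply, Finsupp.finset_sum_apply]
  apply Finset.sum_eq_zero
  intro j _
  rw [theta_vtx]
  exact actV_apply_of_ne k J j.1 m σ (fun he => hσ (he ▸ j.2))

theorem theta_corner_supp (r : Alg k G) (hr : vtxSum k G J * r = r)
    (m : MSlot G J →₀ Alg k (G.shortcut J)) (σ : MSlot G J)
    (hσM : σ ∈ (theta k J r m).support) : σ.v ∈ J := by
  by_contra hσ
  apply Finsupp.mem_support_iff.mp hσM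
  conv_lhs => rw [← hr]
  rw [map_mul, Module.End.mul_apply]
  exact theta_vtxSum_apply_notJ k J _ σ hσ

theorem isCp_one : IsCp k J 1 := by
  intro σ hσ x
  rw [map_one, corner_one_val]
  have hth : theta k J (vtxSum k G J) (Finsupp.single σ x) = Finsupp.single σ x := by
    unfold vtxSum
    rw [map_sum, LinearMap.sum_apply]
    rw [Finset.sum_eq_single (⟨σ.v, hσ⟩ : J)]
    · rw [theta_vtx, actV_single, if_pos rfl]
    · intro j _ hj
      rw [theta_vtx, actV_single, if_neg (fun he => hj (Subtype.ext he.symm))]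
    · intro h
      exact absurd (Finset.mem_univ _) h
  rw [hth, one_mul]

theorem isCp_add {z₁ z₂ : Alg k (G.shortcut J)} (h1 : IsCp k J z₁) (h2 : IsCp k J z₂) :
    IsCp k J (z₁ + z₂) := by
  intro σ hσ x
  rw [map_add, corner_add_val, map_add, LinearMap.add_apply, map_add, h1 σ hσ x, h2 σ hσ x,
    add_mul]

theorem isCp_smul (c : k) (z : Alg k (G.shortcut J)) (h : IsCp k J z) : IsCp k J (c • z) := by
  intro σ hσ x
  rw [map_smul, corner_smul_val, map_smul, LinearMap.smul_apply, map_smul, h σ hσ x,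
    smul_mul_assoc]

theorem isCp_mul {z₁ z₂ : Alg k (G.shortcut J)} (h1 : IsCp k J z₁) (h2 : IsCp k J z₂) :
    IsCp k J (z₁ * z₂) := by
  intro σ hσ x
  rw [map_mul, corner_mul_val, map_mul, Module.End.mul_apply]
  rw [isCp_ext k J h1 _ (fun τ hτ => theta_corner_supp k J _ (phi k J z₂).2.1 _ τ hτ)]
  rw [h2 σ hσ x, mul_assoc]

theorem isCp_vtx (j₀ : (G.shortcut J).V) : IsCp k J (vtx k (G.shortcut J) j₀) := by
  intro σ hσ x
  obtain ⟨j, v, q, hqrel, hqmids⟩ := σ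
  rw [phi_vtx, cornerOf_val, pathProd_nil, theta_vtx, actV_slot, eps_single, ← mul_assoc]
  by_cases hc : v = j₀.1
  · rw [if_pos hc, eps_single]
    congr 1
    by_cases hl : 0 < q.length
    · erw [slotWt_pos k J hl hσ hqrel hqmids, vtx_mul_edg, if_pos (Subtype.ext hc.symm)]
    · have h0 : q.length = 0 := by omega
      cases q with
      | cons q' g hg1 hg2 => simp at h0
      | nil =>
        erw [slotWt_nil, vtx_mul, if_pos (Subtype.ext hc.symm)]
        exact congrArg _ (Subtype.ext hc.symm).symm
  · rw [if_neg hc, map_zero]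
    by_cases hl : 0 < q.length
    · erw [slotWt_pos k J hl hσ hqrel hqmids, vtx_mul_edg,
        if_neg (fun he => hc (congrArg Subtype.val he).symm), zero_mul]
    · have h0 : q.length = 0 := by omega
      cases q with
      | cons q' g hg1 hg2 => simp at h0
      | nil =>
        erw [slotWt_nil, vtx_mul, if_neg (fun he => hc (congrArg Subtype.val he).symm),
          zero_mul]

theorem phi_edg' (a b : J) (p : PathG G a.1 b.1) (h1 : 0 < p.length)
    (h2 : ∀ v ∈ p.mids, v ∉ J) (h3 : ¬ G.HasRel p) :
    phi k J (edg k (⟨a, b, p, h1, h2, h3⟩ : (G.shortcut J).E))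
      = cornerOf k J a.2 b.2 p := by
  erw [phi_edg]

theorem isCp_edg (s : (G.shortcut J).E) : IsCp k J (edg k s) := by
  rcases s with ⟨a, b, p, hplen, hpmids, hprel⟩
  intro σ hσ x
  obtain ⟨j, v, q, hqrel, hqmids⟩ := σ
  rw [phi_edg' k J a b p hplen hpmids hprel, cornerOf_val]
  by_cases h0 : 0 < q.length
  · -- the slot carries a shortcut arrow
    rw [eps_single, slotWt_pos k J h0 hσ hqrel hqmids]
    obtain ⟨c, f, hf, hc, rest, hdecomp⟩ := decomp_first p hplen
    subst hc
    have hpp : pathProd k p = pathProd k rest * (edg k f * vtx k G a.1) := by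
      rw [hdecomp, pathProd_concat, pathProd_cons, pathProd_nil]
    by_cases hva : v = a.1
    · subst hva
      rw [hpp, map_mul, Module.End.mul_apply, map_mul, Module.End.mul_apply, theta_vtx,
        theta_edg, actV_slot, if_pos rfl, actE_single]
      by_cases hjun : G.HasRel (q.cons f hf rfl)
      · rw [stepSlot_rel k J f j a.1 q hqrel hqmids hf hjun x, map_zero, map_zero]
        have hmem : ((⟨j, ⟨a.1, hσ⟩, q, h0, hqmids, hqrel⟩ : (G.shortcut J).E),
            (⟨a, b, p, hplen, hpmids, hprel⟩ : (G.shortcut J).E)) ∈ (G.shortcut J).rel := by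
          refine ⟨Subtype.ext rfl, ?_⟩
          show G.HasRel (q.concat p)
          rw [hasRel_iff_lrel, PathG.arrows_concat]
          refine lrel_junction (List.getLast?_eq_getLast (PathG.arrows_ne_nil q h0)) ?_
            ((hasRel_snoc_iff q hqrel (PathG.arrows_ne_nil q h0) f hf rfl).mp hjun)
          rw [hdecomp, PathG.arrows_concat, PathG.arrows_cons, PathG.arrows_nil]
          simp
        have hzero : edg k (⟨a, b, p, hplen, hpmids, hprel⟩ : (G.shortcut J).E)
            * edg k (⟨j, ⟨a.1, hσ⟩, q, h0, hqmids, hqrel⟩ : (G.shortcut J).E) = 0 :=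
          zrel_alg (G := G.shortcut J) k hmem
        rw [← mul_assoc, hzero, zero_mul]
      · rw [stepSlot_reset k J f j a.1 q hqrel hqmids hf hjun hσ h0
          (not_hasRel_single f hf rfl) (by simp) x]
        have hrel2 : ¬ G.HasRel (((PathG.nil a.1).cons f hf rfl).concat rest) := by
          rw [← hdecomp]
          exact hprel
        have hmids2 : ∀ y ∈ (((PathG.nil a.1).cons f hf rfl).concat rest).mids, y ∉ J := by
          rw [← hdecomp]
          exact hpmids
        rw [theta_chain k J rest ⟨a.1, hσ⟩ ((PathG.nil a.1).cons f hf rfl)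
          (not_hasRel_single f hf rfl) (by simp) hrel2 hmids2 _]
        have hlen2 : 0 < (((PathG.nil a.1).cons f hf rfl).concat rest).length := by
          rw [← hdecomp]
          exact hplen
        rw [eps_single, slotWt_pos k J hlen2 b.2 hrel2 hmids2]
        have hedge : (⟨⟨a.1, hσ⟩, ⟨b.1, b.2⟩, ((PathG.nil a.1).cons f hf rfl).concat rest,
            hlen2, hmids2, hrel2⟩ : (G.shortcut J).E)
            = (⟨a, b, p, hplen, hpmids, hprel⟩ : (G.shortcut J).E) := by
          apply shortcut_edge_ext
          · exact Subtype.ext rfl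
          · show (((PathG.nil a.1).cons f hf rfl).concat rest).arrows = p.arrows
            rw [← hdecomp]
        rw [hedge]
    · rw [hpp, map_mul, Module.End.mul_apply, map_mul, Module.End.mul_apply, theta_vtx,
        actV_slot, if_neg hva, map_zero, map_zero, map_zero]
      have hne : (G.shortcut J).src (⟨a, b, p, hplen, hpmids, hprel⟩ : (G.shortcut J).E)
          ≠ (G.shortcut J).tgt (⟨j, ⟨v, hσ⟩, q, h0, hqmids, hqrel⟩ : (G.shortcut J).E) :=
        fun he => hva (congrArg Subtype.val he).symm
      rw [← mul_assoc, edg_mul_edg_of_ne k hne, zero_mul]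
  · have h00 : q.length = 0 := by omega
    cases q with
    | cons q' g hg1 hg2 => simp at h00
    | nil =>
      rw [eps_single, slotWt_nil]
      by_cases hva : j.1 = a.1
      · have hja : a = j := Subtype.ext hva.symm
        subst hja
        have hrel2 : ¬ G.HasRel ((PathG.nil a.1).concat p) := by
          rw [PathG.nil_concat]
          exact hprel
        have hmids2 : ∀ y ∈ ((PathG.nil a.1).concat p).mids, y ∉ J := by
          rw [PathG.nil_concat]
          exact hpmids
        rw [theta_chain k J p a (PathG.nil a.1) hqrel hqmids hrel2 hmids2 x]
        have hlen2 : 0 < ((PathG.nil a.1).concat p).length := by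
          rw [PathG.nil_concat]
          exact hplen
        rw [eps_single, slotWt_pos k J hlen2 b.2 hrel2 hmids2]
        have hedge : (⟨a, ⟨b.1, b.2⟩, (PathG.nil a.1).concat p, hlen2, hmids2, hrel2⟩
            : (G.shortcut J).E) = (⟨a, b, p, hplen, hpmids, hprel⟩ : (G.shortcut J).E) := by
          apply shortcut_edge_ext
          · rfl
          · show ((PathG.nil a.1).concat p).arrows = p.arrows
            rw [PathG.nil_concat]
        rw [hedge, ← mul_assoc]
        congr 1
        exact (esrc_alg k _).symm
      · obtain ⟨c, f, hf, hc, rest, hdecomp⟩ := decomp_first p hplen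
        subst hc
        have hpp : pathProd k p = pathProd k rest * (edg k f * vtx k G a.1) := by
          rw [hdecomp, pathProd_concat, pathProd_cons, pathProd_nil]
        rw [hpp, map_mul, Module.End.mul_apply, map_mul, Module.End.mul_apply, theta_vtx,
          actV_slot, if_neg hva, map_zero, map_zero, map_zero, ← mul_assoc]
        erw [edg_mul_vtx]
        split_ifs with hje
        · exact absurd (congrArg Subtype.val hje) hva
        · rw [zero_mul]

theorem isCp_all (z : Alg k (G.shortcut J)) : IsCp k J z := by
  obtain ⟨w, rfl⟩ := RingQuot.mkAlgHom_surjective k (PARel k (G.shortcut J)) z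
  induction w using FreeAlgebra.induction with
  | grade0 c =>
    rw [AlgHom.commutes, Algebra.algebraMap_eq_smul_one]
    exact isCp_smul k J c _ (isCp_one k J)
  | grade1 g =>
    cases g with
    | inl j₀ =>
      rw [← vtx_eq_mkAlgHom]
      exact isCp_vtx k J j₀
    | inr s =>
      rw [← edg_eq_mkAlgHom]
      exact isCp_edg k J s
  | mul a b ha hb =>
    rw [map_mul]
    exact isCp_mul k J ha hb
  | add a b ha hb =>
    rw [map_add]
    exact isCp_add k J ha hb

theorem slotWt_triv (j : J) : slotWt k J (trivSlot J j) = vtx k (G.shortcut J) j :=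
  slotWt_nil k J j _ _

theorem phi_key (z : Alg k (G.shortcut J)) :
    eps k J (theta k J (phi k J z).1 (uElt k J)) = z := by
  unfold uElt
  rw [map_sum, map_sum]
  have hc : ∀ j ∈ (Finset.univ : Finset J), eps k J (theta k J (phi k J z).1
      (Finsupp.single (trivSlot J j) 1)) = z * vtx k (G.shortcut J) j := by
    intro j _
    rw [isCp_all k J z (trivSlot J j) j.2 1, eps_single, slotWt_triv, mul_one]
  erw [Finset.sum_congr rfl hc, ← Finset.mul_sum]
  rw [show (∑ j : J, vtx k (G.shortcut J) j) = 1 from vtx_sum_eq_one k, mul_one]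

theorem phi_injective : Function.Injective (phi k J) := by
  intro z z' h
  have h1 := phi_key k J z
  rw [h, phi_key k J z'] at h1
  exact h1.symm

theorem pathProd_mul_pathProd_ne {a b c d : G.V} (p : PathG G a b) (q : PathG G c d)
    (h : d ≠ a) : pathProd k p * pathProd k q = 0 := by
  have h1 : pathProd k p = pathProd k p * vtx k G a := by
    rw [pathProd_mul_vtx, if_pos rfl]
  have h2 : pathProd k q = vtx k G d * pathProd k q := by
    rw [vtx_mul_pathProd, if_pos rfl]
  rw [h1, h2, mul_assoc, ← mul_assoc (vtx k G a), vtx_mul,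
    if_neg (fun he => h he.symm), zero_mul, mul_zero]

theorem pathProd_span_mul {x y : Alg k G}
    (hx : x ∈ Submodule.span k {r : Alg k G | ∃ (a b : G.V) (p : PathG G a b), pathProd k p = r})
    (hy : y ∈ Submodule.span k {r : Alg k G | ∃ (a b : G.V) (p : PathG G a b), pathProd k p = r}) :
    x * y ∈ Submodule.span k {r : Alg k G | ∃ (a b : G.V) (p : PathG G a b), pathProd k p = r} := by
  induction hx using Submodule.span_induction with
  | mem x' hx' =>
    induction hy using Submodule.span_induction with
    | mem y' hy' =>
      obtain ⟨a, b, p, rfl⟩ := hx'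
      obtain ⟨c, d, q, rfl⟩ := hy'
      by_cases h : d = a
      · subst h
        exact Submodule.subset_span ⟨c, b, q.concat p, pathProd_concat k q p⟩
      · rw [pathProd_mul_pathProd_ne k p q h]
        exact Submodule.zero_mem _
    | zero =>
      rw [mul_zero]
      exact Submodule.zero_mem _
    | add y1 y2 hy1 hy2 h1 h2 =>
      rw [mul_add]
      exact Submodule.add_mem _ h1 h2
    | smul cc y1 hy1 h1 =>
      rw [mul_smul_comm]
      exact Submodule.smul_mem _ cc h1
  | zero =>
    rw [zero_mul]
    exact Submodule.zero_mem _
  | add x1 x2 hx1 hx2 h1 h2 =>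
    rw [add_mul]
    exact Submodule.add_mem _ h1 h2
  | smul cc x1 hx1 h1 =>
    rw [smul_mul_assoc]
    exact Submodule.smul_mem _ cc h1

theorem mem_pathProd_span (r : Alg k G) :
    r ∈ Submodule.span k {x : Alg k G | ∃ (a b : G.V) (p : PathG G a b), pathProd k p = x} := by
  obtain ⟨w, rfl⟩ := RingQuot.mkAlgHom_surjective k (PARel k G) r
  induction w using FreeAlgebra.induction with
  | grade0 c =>
    rw [AlgHom.commutes, Algebra.algebraMap_eq_smul_one]
    refine Submodule.smul_mem _ c ?_
    rw [← vtx_sum_eq_one k]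
    refine Submodule.sum_mem _ (fun v _ => ?_)
    exact Submodule.subset_span ⟨v, v, PathG.nil v, pathProd_nil k v⟩
  | grade1 g =>
    cases g with
    | inl v =>
      rw [← vtx_eq_mkAlgHom]
      exact Submodule.subset_span ⟨v, v, PathG.nil v, pathProd_nil k v⟩
    | inr e =>
      rw [← edg_eq_mkAlgHom]
      refine Submodule.subset_span ⟨G.src e, G.tgt e, (PathG.nil (G.src e)).cons e rfl rfl, ?_⟩
      rw [pathProd_cons, pathProd_nil, esrc_alg]
  | mul x y hx hy =>
    rw [map_mul]
    exact pathProd_span_mul k hx hy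
  | add x y hx hy =>
    rw [map_add]
    exact Submodule.add_mem _ hx hy

theorem split_last : ∀ {a b : G.V} (p : PathG G a b), 0 < p.length → a ∈ J →
    ∃ (m : G.V) (hm : m ∈ J) (q : PathG G a m) (s : PathG G m b),
      p = q.concat s ∧ 0 < s.length ∧ (∀ x ∈ s.mids, x ∉ J) := by
  intro a b p
  induction p with
  | nil => intro hpos; simp at hpos
  | cons p' g h₁ h₂ ih =>
    intro hpos haJ
    subst h₂
    subst h₁
    by_cases h0 : 0 < p'.length
    · by_cases hJ : G.src g ∈ J
      · exact ⟨G.src g, hJ, p', (PathG.nil _).cons g rfl rfl,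
          by rw [PathG.concat_cons, PathG.concat_nil], by simp, by simp⟩
      · obtain ⟨m, hm, q, s, hdec, hsl, hsm⟩ := ih h0 haJ
        refine ⟨m, hm, q, s.cons g rfl rfl, by rw [PathG.concat_cons, ← hdec], by simp, ?_⟩
        intro x hx
        rw [PathG.mids_cons] at hx
        rcases List.mem_append.mp hx with h | h
        · exact hsm x h
        · split at h
          · simp at h
          · simp only [List.mem_singleton] at h
            subst h
            exact hJ
    · cases p' with
      | nil =>
        exact ⟨_, haJ, PathG.nil _, (PathG.nil _).cons g rfl rfl,
          (PathG.nil_concat _).symm, by simp, by simp⟩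
      | cons p'' g' h₁' h₂' => simp at h0

theorem corner_pathProd_mem : ∀ (n : ℕ) {a b : G.V} (p : PathG G a b), p.length ≤ n →
    a ∈ J → b ∈ J → ∃ z, (phi k J z).1 = pathProd k p := by
  intro n
  induction n with
  | zero =>
    intro a b p hlen ha hb
    cases p with
    | nil => exact ⟨vtx k (G.shortcut J) ⟨a, ha⟩, by erw [phi_vtx, cornerOf_val]⟩
    | cons p' g h1 h2 => simp at hlen
  | succ n ih =>
    intro a b p hlen ha hb
    by_cases hrel : G.HasRel p
    · exact ⟨0, by rw [map_zero, corner_zero_val, pathProd_zero_of_hasRel k p hrel]⟩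
    by_cases h0 : 0 < p.length
    case neg =>
      cases p with
      | nil => exact ⟨vtx k (G.shortcut J) ⟨a, ha⟩, by erw [phi_vtx, cornerOf_val]⟩
      | cons p' g h1 h2 => simp at h0
    case pos =>
      obtain ⟨m, hm, qq, ss, hdec, hsl, hsm⟩ := split_last J p h0 ha
      have harr : p.arrows = qq.arrows ++ ss.arrows := by
        rw [hdec, PathG.arrows_concat]
      have hqrel : ¬ G.HasRel qq := fun hh => hrel (by
        rw [hasRel_iff_lrel, harr]
        exact lrel_append_left hh)
      have hsrel : ¬ G.HasRel ss := fun hh => hrel (by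
        rw [hasRel_iff_lrel, harr]
        exact lrel_append_right hh)
      have hqlen : qq.length ≤ n := by
        have hlc := PathG.length_concat qq ss
        rw [← hdec] at hlc
        omega
      obtain ⟨z, hz⟩ := ih qq hqlen ha hm
      refine ⟨edg k (⟨⟨m, hm⟩, ⟨b, hb⟩, ss, hsl, hsm, hsrel⟩ : (G.shortcut J).E) * z, ?_⟩
      rw [map_mul, corner_mul_val, phi_edg' k J ⟨m, hm⟩ ⟨b, hb⟩ ss hsl hsm hsrel,
        cornerOf_val, hz, hdec, pathProd_concat]

theorem phi_surjective : Function.Surjective (phi k J) := by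
  intro c
  have key : ∀ r, r ∈ Submodule.span k
        {x : Alg k G | ∃ (a b : G.V) (p : PathG G a b), pathProd k p = x} →
      ∃ z, (phi k J z).1 = vtxSum k G J * r * vtxSum k G J := by
    intro r hr
    induction hr using Submodule.span_induction with
    | mem r' hr' =>
      obtain ⟨a, b, p, rfl⟩ := hr'
      rw [vtxSum_mul_pathProd]
      by_cases hb : b ∈ J
      · rw [if_pos hb, pathProd_mul_vtxSum]
        by_cases ha : a ∈ J
        · rw [if_pos ha]
          exact corner_pathProd_mem k J p.length p le_rfl ha hb
        · rw [if_neg ha]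
          exact ⟨0, by rw [map_zero, corner_zero_val]⟩
      · rw [if_neg hb, zero_mul]
        exact ⟨0, by rw [map_zero, corner_zero_val]⟩
    | zero => exact ⟨0, by rw [map_zero, corner_zero_val, mul_zero, zero_mul]⟩
    | add r1 r2 hr1 hr2 h1 h2 =>
      obtain ⟨z1, hz1⟩ := h1
      obtain ⟨z2, hz2⟩ := h2
      exact ⟨z1 + z2, by rw [map_add, corner_add_val, hz1, hz2, mul_add, add_mul]⟩
    | smul cc r1 hr1 h1 =>
      obtain ⟨z1, hz1⟩ := h1
      exact ⟨cc • z1, by rw [map_smul, corner_smul_val, hz1, mul_smul_comm, smul_mul_assoc]⟩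
  obtain ⟨z, hz⟩ := key c.1 (mem_pathProd_span k c.1)
  refine ⟨z, Subtype.ext ?_⟩
  rw [hz, c.2.1, c.2.2]

end CprimeSection

end QuivRel

/-- **Proposition** (Pilaud–Plamondon–Stella, Section 4).
Let `G` be a gentle quiver with relations over an algebraically closed field `k` and `J` a
subset of its vertices.  Then the path algebra with relations `kQ_J/I_J` of the shortcut
quiver `G_J` is gentle, and it is isomorphic as a `k`-algebra to the corner algebra
`e_J (kQ/I) e_J`, where `e_J` is the sum of the primitive idempotents of `kQ/I` attached to
the vertices in `J`. -/
theorem shortcut_algebra_gentle_and_iso_corner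
    (k : Type) [Field k] [IsAlgClosed k]
    (G : QuivRel) [Fintype G.V] (hG : G.IsGentle) (J : Set G.V) [Fintype J] :
    (G.shortcut J).IsGentle ∧
    Nonempty (QuivRel.Alg k (G.shortcut J) ≃ₐ[k]
      Corner (QuivRel.vtxSum k G J) (QuivRel.vtxSum_idem k G J)) := by
  refine ⟨QuivRel.shortcut_isGentle hG, ⟨AlgEquiv.ofBijective (QuivRel.phi k J)
    ⟨QuivRel.phi_injective k J, QuivRel.phi_surjective k J⟩⟩⟩
end

section
/- Let D∘ ⊂ D∘' be two nested dissections of the polygon P∘. Then every D∘-accordion diagonal of P• is also a D∘'-accordion diagonal of P•. -/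
/-!
Combinatorics of dissections of a convex polygon, following Pilaud–Plamondon–Stella,
"A τ-tilting approach to dissections of polygons".

We fix `2m` points on the unit circle, alternately colored white and black.  The white points
are labelled by `ZMod m` (the white point `i` sitting at angle `2πi/m`), and the black points
are labelled by `ZMod m` as well (the black point `i` sitting between the white points `i` and
`i + 1`).  `P∘` (resp. `P•`) is the convex polygon with white (resp. black) vertices.  Segments
between points of the same color are encoded as unordered pairs `Sym2 (ZMod m)` of labels.
-/

open scoped Classical

/-- The point `x` lies strictly inside the counterclockwise arc from `a` to `b`
(all three points of the same color). -/
def wbtw (m : ℕ) (a x b : ZMod m) : Prop := (x - a).val < (b - a).val ∧ x ≠ a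

/-- The black point `i` (between the white points `i` and `i+1`) lies strictly inside the
counterclockwise arc from the white point `a` to the white point `b`. -/
def bbtw (m : ℕ) (a : ZMod m) (i : ZMod m) (b : ZMod m) : Prop := (i - a).val < (b - a).val

/-- `p` is a diagonal of the polygon: its endpoints are distinct and non-consecutive. -/
def IsDiag (m : ℕ) (p : Sym2 (ZMod m)) : Prop :=
  ∀ a b, p = s(a, b) → a ≠ b ∧ b ≠ a + 1 ∧ a ≠ b + 1

/-- Two segments with endpoints of the same color cross (all four endpoints are distinct, and
exactly one endpoint of the second lies strictly inside each of the two arcs determined by the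
first). -/
def Cross (m : ℕ) (p q : Sym2 (ZMod m)) : Prop :=
  ∀ a b c d, p = s(a, b) → q = s(c, d) →
    (a ≠ c ∧ a ≠ d ∧ b ≠ c ∧ b ≠ d) ∧ (wbtw m a c b ↔ ¬ wbtw m a d b)

/-- The black segment `q` crosses the white segment `p`: exactly one endpoint of `q` lies
strictly inside each of the two arcs determined by `p`. -/
def BWCross (m : ℕ) (q p : Sym2 (ZMod m)) : Prop :=
  ∀ i j a b, q = s(i, j) → p = s(a, b) → (bbtw m a i b ↔ ¬ bbtw m a j b)

/-- A dissection of the white polygon `P∘`: a set of pairwise non-crossing diagonals. -/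
def IsDissection (m : ℕ) (D : Finset (Sym2 (ZMod m))) : Prop :=
  (∀ p ∈ D, IsDiag m p) ∧ ∀ p ∈ D, ∀ q ∈ D, ¬ Cross m p q

/-- `b` is the counterclockwise successor of `a` among the elements of `C`. -/
def nextIn (m : ℕ) (C : Finset (ZMod m)) (a b : ZMod m) : Prop :=
  a ∈ C ∧ b ∈ C ∧ a ≠ b ∧ ∀ x ∈ C, ¬ wbtw m a x b

/-- `C` (a set of white vertices) is a cell of the dissection `D`: it has at least three
vertices, any two cyclically consecutive vertices of `C` are joined by a boundary edge of the
polygon or by a diagonal of `D`, and no diagonal of `D` joins two non-consecutive vertices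
of `C`. -/
def IsCell (m : ℕ) (D : Finset (Sym2 (ZMod m))) (C : Finset (ZMod m)) : Prop :=
  3 ≤ C.card ∧
  (∀ a b, nextIn m C a b → (b = a + 1 ∨ s(a, b) ∈ D)) ∧
  (∀ p ∈ D, ∀ a b, p = s(a, b) → a ∈ C → b ∈ C → (nextIn m C a b ∨ nextIn m C b a))

/-- `p` is an edge of the cell `C` (either a boundary edge of the polygon or a diagonal of the
dissection). -/
def IsCellEdge (m : ℕ) (C : Finset (ZMod m)) (p : Sym2 (ZMod m)) : Prop :=
  ∃ a b, p = s(a, b) ∧ nextIn m C a b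

/-- `q` (a diagonal of the black polygon `P•`) is a `D`-accordion diagonal: it crosses either
none or exactly two consecutive edges (i.e., two edges sharing a vertex) of every cell
of `D`. -/
def IsAccordionDiag (m : ℕ) (D : Finset (Sym2 (ZMod m))) (q : Sym2 (ZMod m)) : Prop :=
  IsDiag m q ∧ ∀ C, IsCell m D C →
    (∀ p, IsCellEdge m C p → ¬ BWCross m q p) ∨
    (∃ p₁ p₂, p₁ ≠ p₂ ∧ IsCellEdge m C p₁ ∧ IsCellEdge m C p₂ ∧
      BWCross m q p₁ ∧ BWCross m q p₂ ∧ (∃ v, v ∈ p₁ ∧ v ∈ p₂) ∧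
      ∀ p, IsCellEdge m C p → BWCross m q p → (p = p₁ ∨ p = p₂))

/-- A `D`-accordion dissection: a set of pairwise non-crossing `D`-accordion diagonals. -/
def IsAccordionDissection (m : ℕ) (D : Finset (Sym2 (ZMod m))) (s : Finset (Sym2 (ZMod m))) :
    Prop :=
  (∀ q ∈ s, IsAccordionDiag m D q) ∧ ∀ q ∈ s, ∀ q' ∈ s, ¬ Cross m q q'

/-- In the two cells of `D` adjacent to the white diagonal `δ∘ = s(a,b)`, the other edge
crossed by the black diagonal `δ•` in the cell `C` contains the white vertex `v`. -/
def OtherCrossedEdgeAt (m : ℕ) (δbull : Sym2 (ZMod m)) (δcirc : Sym2 (ZMod m))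
    (C : Finset (ZMod m)) (v : ZMod m) : Prop :=
  ∃ p, IsCellEdge m C p ∧ p ≠ δcirc ∧ BWCross m δbull p ∧ v ∈ p

/-- The three edges crossed by `δ•` in the two cells of `D` containing `δ∘` form a `Z`. -/
def ZShape (m : ℕ) (D : Finset (Sym2 (ZMod m))) (δcirc δbull : Sym2 (ZMod m)) : Prop :=
  ∃ a b, δcirc = s(a, b) ∧ BWCross m δbull δcirc ∧
    ∃ C₁ C₂, IsCell m D C₁ ∧ IsCell m D C₂ ∧ nextIn m C₁ b a ∧ nextIn m C₂ a b ∧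
      OtherCrossedEdgeAt m δbull δcirc C₁ a ∧ OtherCrossedEdgeAt m δbull δcirc C₂ b

/-- The three edges crossed by `δ•` in the two cells of `D` containing `δ∘` form an `S`. -/
def SShape (m : ℕ) (D : Finset (Sym2 (ZMod m))) (δcirc δbull : Sym2 (ZMod m)) : Prop :=
  ∃ a b, δcirc = s(a, b) ∧ BWCross m δbull δcirc ∧
    ∃ C₁ C₂, IsCell m D C₁ ∧ IsCell m D C₂ ∧ nextIn m C₁ b a ∧ nextIn m C₂ a b ∧
      OtherCrossedEdgeAt m δbull δcirc C₁ b ∧ OtherCrossedEdgeAt m δbull δcirc C₂ a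

/-- The `δ∘`-coordinate `ε(δ∘ ∈ D, δ•)` of the `g`-vector of the black diagonal `δ•` with
respect to the dissection `D`: it is `1`, `-1` or `0` according to whether the three edges
crossed by `δ•` in the two cells of `D` containing `δ∘` form a `Z`, an `S` or a `V` (and `0`
if `δ•` does not cross `δ∘`). -/
noncomputable def gvec (m : ℕ) (D : Finset (Sym2 (ZMod m))) (δbull : Sym2 (ZMod m))
    (δcirc : Sym2 (ZMod m)) : ℤ :=
  if ZShape m D δcirc δbull then 1 else if SShape m D δcirc δbull then -1 else 0

section Found
variable (m : ℕ) [NeZero m]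

/-- position of `x` relative to base point `o`. -/
def pv (o x : ZMod m) : ℕ := (x - o).val

lemma pv_lt (o x : ZMod m) : pv m o x < m := ZMod.val_lt _

omit [NeZero m] in
lemma pv_self (o : ZMod m) : pv m o o = 0 := by simp [pv]

lemma zval_sub (u v : ZMod m) : (u - v).val = (u.val + m - v.val) % m := by
  rw [sub_eq_add_neg, ZMod.val_add, ZMod.neg_val]
  have h1 : u.val < m := ZMod.val_lt u
  have h2 : v.val < m := ZMod.val_lt v
  split_ifs with h
  · subst h
    simp only [ZMod.val_zero, Nat.sub_zero, Nat.add_mod_right, Nat.add_zero]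
  · congr 1; omega

lemma pv_eq_iff (o x y : ZMod m) : x = y ↔ pv m o x = pv m o y := by
  constructor
  · rintro rfl; rfl
  · intro h
    have : x - o = y - o := ZMod.val_injective _ h
    exact sub_left_injective this

lemma pv_ne_iff (o x y : ZMod m) : x ≠ y ↔ pv m o x ≠ pv m o y :=
  not_congr (pv_eq_iff m o x y)

lemma sub_pv (o x y : ZMod m) : (x - y).val = (pv m o x + m - pv m o y) % m := by
  have h : x - y = (x - o) - (y - o) := by ring
  rw [h, zval_sub]; rfl

lemma modsub {X A : ℕ} (hX : X < m) (hA : A < m) :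
    (X + m - A) % m = if A ≤ X then X - A else X + m - A := by
  split_ifs with h
  · have : X + m - A = (X - A) + m := by omega
    rw [this, Nat.add_mod_right, Nat.mod_eq_of_lt (by omega)]
  · exact Nat.mod_eq_of_lt (by omega)

lemma pv_succ (o x : ZMod m) :
    (pv m o x + 1 = m ∧ pv m o (x + 1) = 0) ∨ (pv m o x + 1 < m ∧ pv m o (x + 1) = pv m o x + 1) := by
  have h1 : pv m o x < m := pv_lt m o x
  have hx : x + 1 - o = (x - o) + 1 := by ring
  have hv : pv m o (x + 1) = (pv m o x + (1 : ZMod m).val) % m := by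
    show (x + 1 - o).val = _
    rw [hx, ZMod.val_add]; rfl
  rcases Nat.lt_or_ge 1 m with h | h
  · have hone : (1 : ZMod m).val = 1 := by
      haveI : Fact (1 < m) := ⟨h⟩
      exact ZMod.val_one m
    rw [hone] at hv
    rcases Nat.eq_or_lt_of_le (Nat.succ_le_of_lt h1) with he | hlt
    · left
      have he' : pv m o x + 1 = m := he
      refine ⟨he', ?_⟩; rw [hv, he', Nat.mod_self]
    · have hlt' : pv m o x + 1 < m := hlt
      right; refine ⟨hlt', ?_⟩; rw [hv, Nat.mod_eq_of_lt hlt']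
  · have hm1 : m = 1 := by have := NeZero.pos m; omega
    subst hm1
    have h2 : pv 1 o (x + 1) < 1 := pv_lt 1 o (x + 1)
    omega

lemma bbtw_pv (o a i b : ZMod m) :
    bbtw m a i b ↔ ((pv m o a ≤ pv m o i ∧ pv m o i < pv m o b) ∨
      (pv m o b < pv m o a ∧ pv m o a ≤ pv m o i) ∨
      (pv m o b < pv m o a ∧ pv m o i < pv m o b)) := by
  have hI := pv_lt m o i; have hA := pv_lt m o a; have hB := pv_lt m o b
  rw [bbtw, sub_pv m o, sub_pv m o, modsub m hI hA, modsub m hB hA]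
  split_ifs <;> omega

lemma wbtw_pv (o a x b : ZMod m) :
    wbtw m a x b ↔ (((pv m o a ≤ pv m o x ∧ pv m o x < pv m o b) ∨
      (pv m o b < pv m o a ∧ pv m o a ≤ pv m o x) ∨
      (pv m o b < pv m o a ∧ pv m o x < pv m o b)) ∧ pv m o x ≠ pv m o a) := by
  rw [wbtw, ← bbtw, bbtw_pv m o]
  simp only [ne_eq, pv_eq_iff m o x a]

end Found
section Comb
variable (m : ℕ) [NeZero m]

lemma black_flip {a b : ZMod m} (k : ZMod m) (hab : a ≠ b) :
    bbtw m a k b ↔ ¬ bbtw m b k a := by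
  rw [pv_ne_iff m a] at hab
  rw [bbtw_pv m a, bbtw_pv m a]
  have h1 := pv_lt m a a; have h2 := pv_lt m a b; have h3 := pv_lt m a k
  have h4 := pv_self m a
  omega

lemma white_cases {a b x : ZMod m} (hab : a ≠ b) (hxa : x ≠ a) (hxb : x ≠ b) :
    wbtw m a x b ∨ wbtw m b x a := by
  rw [pv_ne_iff m a] at hxa hxb hab
  rw [wbtw_pv m a, wbtw_pv m a]
  have h1 := pv_lt m a a; have h2 := pv_lt m a b; have h3 := pv_lt m a x
  have h4 := pv_self m a
  omega

lemma pv_pred (k : ZMod m) : pv m (k + 1) k = m - 1 := by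
  have h := pv_succ m (k + 1) k
  have h2 := pv_self m (k + 1)
  have h3 := pv_lt m (k + 1) k
  omega

/-- every cyclic interval of `C` around a black point `k`: all points of `C` lie
position-wise (base `k+1`) between `b` and `a`. -/
lemma arc_gap {C : Finset (ZMod m)} {a b : ZMod m} (k : ZMod m)
    (h : nextIn m C a b) (hk : bbtw m a k b) {x : ZMod m} (hx : x ∈ C) :
    pv m (k+1) b ≤ pv m (k+1) x ∧ pv m (k+1) x ≤ pv m (k+1) a := by
  obtain ⟨ha, hb, hab, hno⟩ := h
  have hw := hno x hx
  rw [pv_ne_iff m (k+1)] at hab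
  rw [wbtw_pv m (k+1)] at hw
  rw [bbtw_pv m (k+1)] at hk
  have h1 := pv_lt m (k+1) a; have h2 := pv_lt m (k+1) b; have h3 := pv_lt m (k+1) x
  have h4 := pv_pred m k; have h5 := pv_self m (k+1)
  omega

lemma bbtw_gap_iff {a b : ZMod m} (k : ZMod m) (hab : a ≠ b) :
    bbtw m a k b ↔ pv m (k+1) b < pv m (k+1) a := by
  rw [pv_ne_iff m (k+1)] at hab
  rw [bbtw_pv m (k+1)]
  have h1 := pv_lt m (k+1) a; have h2 := pv_lt m (k+1) b
  have h4 := pv_pred m k; have h5 := pv_self m (k+1)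
  omega

lemma find_gap {C : Finset (ZMod m)} (h2 : 2 ≤ C.card) (k : ZMod m) :
    ∃ a b, nextIn m C a b ∧ bbtw m a k b := by
  have hne : C.Nonempty := Finset.card_pos.mp (by omega)
  obtain ⟨a, ha, hamax⟩ := Finset.exists_max_image C (fun x => pv m (k+1) x) hne
  obtain ⟨b, hb, hbmin⟩ := Finset.exists_min_image C (fun x => pv m (k+1) x) hne
  have hab : a ≠ b := by
    intro he
    obtain ⟨u, hu, v, hv, huv⟩ := Finset.one_lt_card.mp (by omega : 1 < C.card)
    apply huv
    rw [pv_eq_iff m (k+1)]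
    have h1 := hamax u hu; have h2 := hbmin u hu
    have h3 := hamax v hv; have h4 := hbmin v hv
    rw [pv_eq_iff m (k+1)] at he
    omega
  refine ⟨a, b, ⟨ha, hb, hab, ?_⟩, ?_⟩
  · intro x hx
    have h1 := hamax x hx; have h2 := hbmin x hx
    rw [wbtw_pv m (k+1)]
    have h3 := pv_lt m (k+1) a; have h4 := pv_lt m (k+1) b
    omega
  · rw [bbtw_gap_iff m k hab]
    have h3 := hamax b hb; have h4 := hbmin a ha
    rw [pv_ne_iff m (k+1)] at hab
    omega

lemma gap_unique {C : Finset (ZMod m)} {a b c d : ZMod m} (k : ZMod m)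
    (h1 : nextIn m C a b) (h2 : nextIn m C c d)
    (hk1 : bbtw m a k b) (hk2 : bbtw m c k d) : a = c ∧ b = d := by
  have g1 := arc_gap m k h1 hk1 h2.1
  have g2 := arc_gap m k h1 hk1 h2.2.1
  have g3 := arc_gap m k h2 hk2 h1.1
  have g4 := arc_gap m k h2 hk2 h1.2.1
  rw [bbtw_gap_iff m k h1.2.2.1] at hk1
  rw [bbtw_gap_iff m k h2.2.2.1] at hk2
  constructor <;> rw [pv_eq_iff m (k+1)] <;> omega

lemma nextIn_succ_unique {C : Finset (ZMod m)} {a b b' : ZMod m}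
    (h1 : nextIn m C a b) (h2 : nextIn m C a b') : b = b' := by
  obtain ⟨ha, hb, hab, hno⟩ := h1
  obtain ⟨-, hb', hab', hno'⟩ := h2
  have w1 := hno b' hb'
  have w2 := hno' b hb
  rw [wbtw_pv m a] at w1 w2
  rw [pv_ne_iff m a] at hab hab'
  rw [pv_eq_iff m a]
  have h3 := pv_lt m a b; have h4 := pv_lt m a b'; have h5 := pv_self m a
  omega

lemma nextIn_pred_unique {C : Finset (ZMod m)} {a a' b : ZMod m}
    (h1 : nextIn m C a b) (h2 : nextIn m C a' b) : a = a' := by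
  obtain ⟨ha, hb, hab, hno⟩ := h1
  obtain ⟨ha', -, hab', hno'⟩ := h2
  have w1 := hno a' ha'
  have w2 := hno' a ha
  rw [wbtw_pv m b] at w1 w2
  rw [pv_ne_iff m b] at hab hab'
  rw [pv_eq_iff m b]
  have h3 := pv_lt m b a; have h4 := pv_lt m b a'; have h5 := pv_self m b
  omega

lemma nextIn_not_both {C : Finset (ZMod m)} {a b : ZMod m} (hcard : 3 ≤ C.card)
    (h1 : nextIn m C a b) (h2 : nextIn m C b a) : False := by
  have hsub : ¬ C ⊆ {a, b} := by
    intro hs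
    have := Finset.card_le_card hs
    have := Finset.card_insert_le a ({b} : Finset (ZMod m))
    simp only [Finset.card_singleton] at this
    omega
  obtain ⟨x, hx, hxab⟩ := Finset.not_subset.mp hsub
  simp only [Finset.mem_insert, Finset.mem_singleton, not_or] at hxab
  rcases white_cases m h1.2.2.1 hxab.1 hxab.2 with h | h
  · exact h1.2.2.2 x hx h
  · exact h2.2.2.2 x hx h

end Comb
section Sym
variable (m : ℕ) [NeZero m]

lemma isDiag_elim {a b : ZMod m} (h : IsDiag m s(a,b)) : a ≠ b ∧ b ≠ a + 1 ∧ a ≠ b + 1 :=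
  h a b rfl

lemma white_flip {a b x : ZMod m} (hab : a ≠ b) (hxa : x ≠ a) (hxb : x ≠ b) :
    wbtw m a x b ↔ ¬ wbtw m b x a := by
  rw [pv_ne_iff m a] at hxa hxb hab
  rw [wbtw_pv m a, wbtw_pv m a]
  have h1 := pv_lt m a a; have h2 := pv_lt m a b; have h3 := pv_lt m a x
  have h4 := pv_self m a
  omega

lemma bwcross_iff {i j u v : ZMod m} (huv : u ≠ v) :
    BWCross m s(i,j) s(u,v) ↔ (bbtw m u i v ↔ ¬ bbtw m u j v) := by
  constructor
  · exact fun h => h i j u v rfl rfl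
  · intro h i' j' u' v' h1 h2
    rw [Sym2.eq_iff] at h1 h2
    have hf1 := black_flip m i huv
    have hf2 := black_flip m j huv
    rcases h1 with ⟨rfl, rfl⟩ | ⟨rfl, rfl⟩ <;> rcases h2 with ⟨rfl, rfl⟩ | ⟨rfl, rfl⟩ <;> tauto

lemma cross_of {a b c d : ZMod m} (hab : a ≠ b) (hcd : c ≠ d)
    (h1 : a ≠ c) (h2 : a ≠ d) (h3 : b ≠ c) (h4 : b ≠ d)
    (h5 : wbtw m a c b ↔ ¬ wbtw m a d b) : Cross m s(a,b) s(c,d) := by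
  intro a' b' c' d' e1 e2
  rw [Sym2.eq_iff] at e1 e2
  have hfc := white_flip m hab h1.symm h3.symm
  have hfd := white_flip m hab h2.symm h4.symm
  rcases e1 with ⟨rfl, rfl⟩ | ⟨rfl, rfl⟩ <;> rcases e2 with ⟨rfl, rfl⟩ | ⟨rfl, rfl⟩ <;>
    refine ⟨⟨?_, ?_, ?_, ?_⟩, ?_⟩ <;> tauto

end Sym
section Step
variable {m : ℕ} [NeZero m]

/-- visibility of `x` (strictly inside the arc `(e,f)`) from the diagonal `s(e,f)`,
with respect to the dissection `D`. -/
def Vis (m : ℕ) (D : Finset (Sym2 (ZMod m))) (e f : ZMod m) (x : ZMod m) : Prop :=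
  wbtw m e x f ∧ ∀ p ∈ D, ∀ u v : ZMod m, p = s(u,v) →
    ¬ (wbtw m u x v ∧ ¬ wbtw m u e v ∧ ¬ wbtw m u f v)

/-- the cell of `D` obtained by merging the cell `C₀` of `D ∪ {s(e,f)}` with the points
visible across `s(e,f)`. -/
noncomputable def mergedC (m : ℕ) [NeZero m] (D : Finset (Sym2 (ZMod m))) (e f : ZMod m)
    (C₀ : Finset (ZMod m)) : Finset (ZMod m) :=
  C₀ ∪ Finset.univ.filter (Vis m D e f)

variable {D : Finset (Sym2 (ZMod m))} {e f : ZMod m} {C₀ : Finset (ZMod m)}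

lemma mem_mergedC {x : ZMod m} :
    x ∈ mergedC m D e f C₀ ↔ x ∈ C₀ ∨ Vis m D e f x := by
  simp [mergedC]

section Ctx
variable (hm3 : 3 ≤ m) (hD : IsDissection m D) (hδD : s(e,f) ∉ D)
  (hDδ : IsDissection m (insert s(e,f) D))
  (hC₀ : IsCell m (insert s(e,f) D) C₀) (hef : nextIn m C₀ e f)

include hDδ in
lemma L_bounds : 2 ≤ pv m e f ∧ pv m e f ≤ m - 2 := by
  obtain ⟨h1, h2, h3⟩ := isDiag_elim m (hDδ.1 _ (Finset.mem_insert_self _ _))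
  rw [pv_ne_iff m e] at h1
  rw [pv_ne_iff m e] at h2 h3
  have hs1 := pv_succ m e e
  have hs2 := pv_succ m e f
  have h4 := pv_self m e
  have h5 := pv_lt m e f
  have h6 := pv_lt m e (e+1)
  have h7 := pv_lt m e (f+1)
  omega

include hef in
lemma C₀_pos {x : ZMod m} (hx : x ∈ C₀) : pv m e x = 0 ∨ pv m e f ≤ pv m e x := by
  have hw := hef.2.2.2 x hx
  rw [wbtw_pv m e] at hw
  have h4 := pv_self m e
  have h5 := pv_lt m e f; have h6 := pv_lt m e x
  omega

lemma Vis_pos {x : ZMod m} (hx : Vis m D e f x) : 0 < pv m e x ∧ pv m e x < pv m e f := by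
  have hw := hx.1
  rw [wbtw_pv m e] at hw
  have h4 := pv_self m e
  have h5 := pv_lt m e f; have h6 := pv_lt m e x
  omega

include hm3 hD hδD hDδ hC₀ hef in
/-- chain lemma: consecutive vertices of the merged cell inside the arc `[e,f]` are joined
by a diagonal of `D` (or are adjacent). -/
lemma ins {a b : ZMod m} (hab : nextIn m (mergedC m D e f C₀) a b)
    (h1 : pv m e a < pv m e b) (h2 : pv m e b ≤ pv m e f) (h3 : b ≠ a + 1) :
    s(a, b) ∈ D := by
  have hL := L_bounds (m := m) hDδ
  have hmm := NeZero.pos m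
  have key : ∀ n, ∀ w : ZMod m, pv m e b - pv m e w ≤ n → pv m e a < pv m e w →
      pv m e w ≤ pv m e b → (w = a + 1 ∨ s(a, w) ∈ D) → s(a, b) ∈ D := by
    intro n
    induction n using Nat.strong_induction_on with
    | _ n ih =>
      intro w hn hw1 hw2 hlink
      by_cases hwb : pv m e w = pv m e b
      · have hwb' : w = b := (pv_eq_iff m e w b).mpr hwb
        subst hwb'
        rcases hlink with h | h
        · exact absurd h h3
        · exact h
      -- w is strictly inside the arc (a, b), hence not in the merged cell
      · have hwlt : pv m e w < pv m e b := by omega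
        have hwmem : w ∉ mergedC m D e f C₀ := by
          intro hmem
          apply hab.2.2.2 w hmem
          rw [wbtw_pv m e]
          omega
        rw [mem_mergedC] at hwmem
        push_neg at hwmem
        obtain ⟨hw0, hwVis⟩ := hwmem
        have hwef : wbtw m e w f := by
          rw [wbtw_pv m e]
          have := pv_self m e
          omega
        rw [Vis] at hwVis
        push_neg at hwVis
        obtain ⟨p, hp, u, v, rfl, hcov⟩ := hwVis hwef
        obtain ⟨huv, -, -⟩ := isDiag_elim m (hD.1 _ hp)
        obtain ⟨hcov1, hcov2, hcov3⟩ := hcov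
        -- positions of u, v
        rw [pv_ne_iff m e] at huv
        have hposu := pv_lt m e u; have hposv := pv_lt m e v
        have hpose := pv_self m e
        have hclaim : pv m e u < pv m e v ∧ pv m e v ≤ pv m e f ∧
            pv m e u < pv m e w ∧ pv m e w < pv m e v := by
          rw [wbtw_pv m e] at hcov1 hcov2 hcov3
          omega
        -- a is not strictly inside (u, v)
        have hna : ¬ wbtw m u a v := by
          rcases mem_mergedC.mp hab.1 with ha0 | haV
          · have := C₀_pos (m := m) hef ha0
            have hae : a = e := by rw [pv_eq_iff m e]; omega
            subst hae; exact hcov2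
          · exact fun hw => haV.2 _ hp u v rfl ⟨hw, hcov2, hcov3⟩
        have hnb : ¬ wbtw m u b v := by
          rcases mem_mergedC.mp hab.2.1 with hb0 | hbV
          · have := C₀_pos (m := m) hef hb0
            have hbf : b = f := by rw [pv_eq_iff m e]; omega
            subst hbf; exact hcov3
          · exact fun hw => hbV.2 _ hp u v rfl ⟨hw, hcov2, hcov3⟩
        rw [wbtw_pv m e] at hna hnb
        have hau : pv m e a ≤ pv m e u := by omega
        have hua : u = a := by
          rcases Nat.eq_or_lt_of_le hau with h | h
          · rw [pv_eq_iff m e]; omega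
          -- a strictly before u: contradiction with the chain link
          · exfalso
            rcases hlink with rfl | hD1
            · have := pv_succ m e a
              omega
            · -- s(a, w) ∈ D crosses s(u, v)
              apply hD.2 _ hD1 _ hp
              apply cross_of m
              · rw [pv_ne_iff m e]; omega
              · rw [pv_ne_iff m e]; omega
              · rw [pv_ne_iff m e]; omega
              · rw [pv_ne_iff m e]; omega
              · rw [pv_ne_iff m e]; omega
              · rw [pv_ne_iff m e]; omega
              · constructor
                · intro _
                  rw [wbtw_pv m e]
                  omega
                · intro h'
                  rw [wbtw_pv m e]
                  omega
        subst hua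
        exact ih (pv m e b - pv m e v) (by omega) v (by omega) (by omega) (by omega)
          (Or.inr hp)
  have hstart := pv_succ m e a
  have hpose := pv_self m e
  have hne : pv m e (a+1) = pv m e a + 1 := by omega
  have hab1 : pv m e a < pv m e (a+1) := by omega
  have hab2 : pv m e (a+1) ≤ pv m e b := by
    rcases Nat.eq_or_lt_of_le (by omega : pv m e a + 1 ≤ pv m e b) with h | h
    · exfalso; exact h3 ((pv_eq_iff m e b (a+1)).mpr (by omega))
    · omega
  exact key (pv m e b) (a+1) (by omega) hab1 hab2 (Or.inl rfl)

end Ctx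
end Step
section Step2
variable {m : ℕ} [NeZero m]
variable {D : Finset (Sym2 (ZMod m))} {e f : ZMod m} {C₀ : Finset (ZMod m)}
variable (hm3 : 3 ≤ m) (hD : IsDissection m D) (hδD : s(e,f) ∉ D)
  (hDδ : IsDissection m (insert s(e,f) D))
  (hC₀ : IsCell m (insert s(e,f) D) C₀) (hef : nextIn m C₀ e f)

include hDδ hC₀ hef in
/-- a gap of `C₀` other than `(e,f)` is still a gap of the merged cell. -/
lemma gap_transfer {c d : ZMod m} (hcd : nextIn m C₀ c d) (hne : ¬ (c = e ∧ d = f)) :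
    nextIn m (mergedC m D e f C₀) c d := by
  have hL := L_bounds (m := m) hDδ
  refine ⟨mem_mergedC.mpr (Or.inl hcd.1), mem_mergedC.mpr (Or.inl hcd.2.1), hcd.2.2.1, ?_⟩
  intro x hx hw
  rcases mem_mergedC.mp hx with hx0 | hxV
  · exact hcd.2.2.2 x hx0 hw
  · have hxp := Vis_pos (m := m) hxV
    have hcp := C₀_pos (m := m) hef hcd.1
    have hdp := C₀_pos (m := m) hef hcd.2.1
    have hce := hcd.2.2.2 e hef.1
    have hcf := hcd.2.2.2 f hef.2.1
    have hne' : ¬ (pv m e c = 0 ∧ pv m e d = pv m e f) := by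
      rintro ⟨u1, u2⟩
      refine hne ⟨(pv_eq_iff m e c e).mpr (by rw [pv_self]; omega),
        (pv_eq_iff m e d f).mpr u2⟩
    rw [wbtw_pv m e] at hw hce hcf
    have h1 := pv_lt m e c; have h2 := pv_lt m e d
    have h4 := pv_self m e
    have hcdne : pv m e c ≠ pv m e d := by rw [← pv_ne_iff m e]; exact hcd.2.2.1
    omega

include hm3 hD hδD hDδ hC₀ hef in
/-- a diagonal of `D` with both endpoints in the closed arc `[e,f]` bounds a gap of
the merged cell. -/
lemma vhalf {a b : ZMod m} (hp : s(a,b) ∈ D)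
    (haM : a ∈ mergedC m D e f C₀) (hbM : b ∈ mergedC m D e f C₀)
    (h1 : pv m e a < pv m e b) (h2 : pv m e b ≤ pv m e f) :
    nextIn m (mergedC m D e f C₀) a b := by
  have hL := L_bounds (m := m) hDδ
  refine ⟨haM, hbM, by rw [pv_ne_iff m e]; omega, ?_⟩
  intro x hx hw
  have h4 := pv_self m e
  have h5 := pv_lt m e f
  rcases mem_mergedC.mp hx with hx0 | hxV
  · have hxp := C₀_pos (m := m) hef hx0
    rw [wbtw_pv m e] at hw
    omega
  · apply hxV.2 _ hp a b rfl
    refine ⟨hw, ?_, ?_⟩ <;> rw [wbtw_pv m e] <;> omega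

include hm3 hD hδD hDδ hC₀ hef in
lemma merged_isCell : IsCell m D (mergedC m D e f C₀) := by
  have hL := L_bounds (m := m) hDδ
  have h4 := pv_self m e
  have h5 := pv_lt m e f
  refine ⟨le_trans hC₀.1 (Finset.card_le_card Finset.subset_union_left), ?_, ?_⟩
  · -- consecutive vertices are joined by an edge or a diagonal of D
    intro a b hab
    by_cases hba1 : b = a + 1
    · exact Or.inl hba1
    right
    have ha := pv_lt m e a; have hb := pv_lt m e b
    have habne : pv m e a ≠ pv m e b := by rw [← pv_ne_iff m e]; exact hab.2.2.1
    have hne_e := hab.2.2.2 e (mem_mergedC.mpr (Or.inl hef.1))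
    have hne_f := hab.2.2.2 f (mem_mergedC.mpr (Or.inl hef.2.1))
    rw [wbtw_pv m e] at hne_e hne_f
    by_cases hin : pv m e a < pv m e b ∧ pv m e b ≤ pv m e f
    · exact ins hm3 hD hδD hDδ hC₀ hef hab hin.1 hin.2 hba1
    · -- both endpoints in C₀ and the gap is outside (e,f)
      have ha0 : a ∈ C₀ := by
        rcases mem_mergedC.mp hab.1 with h | h
        · exact h
        · exfalso; have := Vis_pos (m := m) h; omega
      have hb0 : b ∈ C₀ := by
        rcases mem_mergedC.mp hab.2.1 with h | h
        · exact h
        · exfalso; have := Vis_pos (m := m) h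
          have := C₀_pos (m := m) hef ha0; omega
      have hC₀ab : nextIn m C₀ a b :=
        ⟨ha0, hb0, hab.2.2.1, fun x hx => hab.2.2.2 x (mem_mergedC.mpr (Or.inl hx))⟩
      rcases hC₀.2.1 a b hC₀ab with h | h
      · exact absurd h hba1
      rcases Finset.mem_insert.mp h with h | h
      · -- s(a,b) = s(e,f): impossible
        exfalso
        have hap := C₀_pos (m := m) hef ha0
        have hbp := C₀_pos (m := m) hef hb0
        rcases Sym2.eq_iff.mp h with ⟨h1, h2⟩ | ⟨h1, h2⟩
        · rw [pv_eq_iff m e] at h1 h2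
          omega
        · -- a = f, b = e : some third vertex of C₀ lies strictly in (f, e)
          rw [pv_eq_iff m e] at h1 h2
          have hsub : ¬ C₀ ⊆ {e, f} := by
            intro hs
            have := Finset.card_le_card hs
            have := Finset.card_insert_le e ({f} : Finset (ZMod m))
            simp only [Finset.card_singleton] at this
            have := hC₀.1
            omega
          obtain ⟨x, hx, hxef⟩ := Finset.not_subset.mp hsub
          simp only [Finset.mem_insert, Finset.mem_singleton, not_or] at hxef
          have hxp := C₀_pos (m := m) hef hx
          have hxe : pv m e x ≠ pv m e e := by rw [← pv_ne_iff m e]; exact hxef.1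
          have hxf : pv m e x ≠ pv m e f := by rw [← pv_ne_iff m e]; exact hxef.2
          have hw := hab.2.2.2 x (mem_mergedC.mpr (Or.inl hx))
          rw [wbtw_pv m e] at hw
          omega
      · exact h
  · -- no diagonal of D joins two non-consecutive vertices of the merged cell
    intro p hp a b hrep haM hbM
    subst hrep
    obtain ⟨hdab, -, -⟩ := isDiag_elim m (hD.1 _ hp)
    have habne : pv m e a ≠ pv m e b := by rw [← pv_ne_iff m e]; exact hdab
    by_cases hcase : a ∈ C₀ ∧ b ∈ C₀
    · have hee : ¬ (a = e ∧ b = f) := by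
        rintro ⟨rfl, rfl⟩; exact hδD hp
      have hff : ¬ (b = e ∧ a = f) := by
        rintro ⟨rfl, rfl⟩; rw [Sym2.eq_swap] at hp; exact hδD hp
      rcases hC₀.2.2 _ (Finset.mem_insert_of_mem hp) a b rfl hcase.1 hcase.2 with h | h
      · exact Or.inl (gap_transfer hDδ hC₀ hef h hee)
      · exact Or.inr (gap_transfer hDδ hC₀ hef h hff)
    · -- one endpoint is visible: both endpoints lie in the closed arc [e,f]
      have hVab : (0 < pv m e a ∧ pv m e a < pv m e f) ∨
          (0 < pv m e b ∧ pv m e b < pv m e f) := by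
        rcases mem_mergedC.mp haM with h | h
        · rcases mem_mergedC.mp hbM with h' | h'
          · exact absurd ⟨h, h'⟩ hcase
          · exact Or.inr (Vis_pos (m := m) h')
        · exact Or.inl (Vis_pos (m := m) h)
      have hbnd : pv m e a ≤ pv m e f ∧ pv m e b ≤ pv m e f := by
        have hcr : ∀ x y : ZMod m, s(x,y) ∈ D → 0 < pv m e x → pv m e x < pv m e f →
            pv m e f < pv m e y → False := by
          intro x y hxy hx1 hx2 hy
          have hylt := pv_lt m e y
          apply hDδ.2 _ (Finset.mem_insert_self _ _) _ (Finset.mem_insert_of_mem hxy)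
          apply cross_of m
          · rw [pv_ne_iff m e]; omega
          · rw [pv_ne_iff m e]; omega
          · rw [pv_ne_iff m e]; omega
          · rw [pv_ne_iff m e]; omega
          · rw [pv_ne_iff m e]; omega
          · rw [pv_ne_iff m e]; omega
          · constructor
            · intro _; intro hcon
              rw [wbtw_pv m e] at hcon
              omega
            · intro h'
              rw [wbtw_pv m e]
              omega
        rcases hVab with ⟨u1, u2⟩ | ⟨u1, u2⟩
        · refine ⟨by omega, ?_⟩
          by_contra hcon
          exact hcr a b hp u1 u2 (by omega)
        · refine ⟨?_, by omega⟩
          by_contra hcon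
          refine hcr b a ?_ u1 u2 (by omega)
          rw [Sym2.eq_swap] at hp; exact hp
      rcases Nat.lt_or_ge (pv m e a) (pv m e b) with h | h
      · exact Or.inl (vhalf hm3 hD hδD hDδ hC₀ hef hp haM hbM h hbnd.2)
      · refine Or.inr (vhalf hm3 hD hδD hDδ hC₀ hef ?_ hbM haM (by omega) hbnd.1)
        rw [Sym2.eq_swap] at hp; exact hp

end Step2
section Step3
variable {m : ℕ} [NeZero m]
variable {D : Finset (Sym2 (ZMod m))} {e f : ZMod m} {C₀ : Finset (ZMod m)}
variable (hm3 : 3 ≤ m) (hD : IsDissection m D) (hδD : s(e,f) ∉ D)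
  (hDδ : IsDissection m (insert s(e,f) D))
  (hC₀ : IsCell m (insert s(e,f) D) C₀) (hef : nextIn m C₀ e f)

include hDδ hef in
/-- the gap of the merged cell containing a black point of the arc `(e,f)` lies inside `[e,f]`. -/
lemma ingap {A B i : ZMod m} (hAB : nextIn m (mergedC m D e f C₀) A B)
    (hi : bbtw m A i B) (hif : bbtw m e i f) :
    pv m e A < pv m e B ∧ pv m e B ≤ pv m e f := by
  have hL := L_bounds (m := m) hDδ
  have h4 := pv_self m e
  have h5 := pv_lt m e f
  have hA := pv_lt m e A; have hB := pv_lt m e B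
  have hABne : pv m e A ≠ pv m e B := by rw [← pv_ne_iff m e]; exact hAB.2.2.1
  have hne_e := hAB.2.2.2 e (mem_mergedC.mpr (Or.inl hef.1))
  have hne_f := hAB.2.2.2 f (mem_mergedC.mpr (Or.inl hef.2.1))
  rw [wbtw_pv m e] at hne_e hne_f
  rw [bbtw_pv m e] at hi hif
  have hIlt := pv_lt m e i
  omega

include hm3 hD hδD hDδ hC₀ hef in
/-- key lemma: if the black endpoint `i` lies in the gap `(e,f)` of `C₀` and `j` lies in
another gap `(c,d)`, then the edges `s(e,f)` and `s(c,d)` share a vertex. -/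
lemma share {i j c d : ZMod m} (hq : IsAccordionDiag m D s(i,j))
    (hi : bbtw m e i f) (hcd : nextIn m C₀ c d) (hj : bbtw m c j d)
    (hcdne : ¬ (c = e ∧ d = f)) :
    ∃ v : ZMod m, v ∈ (s(e,f) : Sym2 (ZMod m)) ∧ v ∈ (s(c,d) : Sym2 (ZMod m)) := by
  have hL := L_bounds (m := m) hDδ
  have h4 := pv_self m e
  have h5 := pv_lt m e f
  have hcell := merged_isCell hm3 hD hδD hDδ hC₀ hef
  have hCCcd := gap_transfer hDδ hC₀ hef hcd hcdne
  obtain ⟨A, B, hAB, hiA⟩ := find_gap m (by have := hcell.1; omega : 2 ≤ (mergedC m D e f C₀).card) i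
  have hABpos := ingap hDδ hef hAB hiA hi
  have hABne : ¬ (A = c ∧ B = d) := by
    rintro ⟨rfl, rfl⟩
    exact hcdne ⟨(gap_unique m i hcd hef hiA hi).1, (gap_unique m i hcd hef hiA hi).2⟩
  have hq0 : BWCross m s(i,j) s(A,B) := by
    rw [bwcross_iff m hAB.2.2.1]
    constructor
    · intro _ hj'
      exact hABne ⟨(gap_unique m j hAB hCCcd hj' hj).1, (gap_unique m j hAB hCCcd hj' hj).2⟩
    · intro _; exact hiA
  have hq1 : BWCross m s(i,j) s(c,d) := by
    rw [bwcross_iff m hcd.2.2.1]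
    constructor
    · intro hi'
      exfalso
      exact hcdne ⟨(gap_unique m i hcd hef hi' hi).1, (gap_unique m i hcd hef hi' hi).2⟩
    · intro hnj
      exact absurd hj hnj
  have hedge_ne : (s(A,B) : Sym2 (ZMod m)) ≠ s(c,d) := by
    intro hcon
    rcases Sym2.eq_iff.mp hcon with ⟨h1, h2⟩ | ⟨h1, h2⟩
    · exact hABne ⟨h1, h2⟩
    · subst h1; subst h2
      exact nextIn_not_both m hcell.1 hCCcd hAB
  rcases hq.2 _ hcell with hleft | ⟨p₁, p₂, hp12, hE1, hE2, hB1, hB2, ⟨v, hv1, hv2⟩, hmax⟩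
  · exact absurd hq0 (hleft _ ⟨A, B, rfl, hAB⟩)
  · have e1 := hmax _ ⟨A, B, rfl, hAB⟩ hq0
    have e2 := hmax _ ⟨c, d, rfl, hCCcd⟩ hq1
    have hv : v ∈ (s(A,B) : Sym2 (ZMod m)) ∧ v ∈ (s(c,d) : Sym2 (ZMod m)) := by
      rcases e1 with h1 | h1 <;> rcases e2 with h2 | h2
      · exact absurd (h1.trans h2.symm) hedge_ne
      · exact ⟨h1 ▸ hv1, h2 ▸ hv2⟩
      · exact ⟨h1 ▸ hv2, h2 ▸ hv1⟩
      · exact absurd (h1.trans h2.symm) hedge_ne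
    rw [Sym2.mem_iff, Sym2.mem_iff] at hv
    have hApos := pv_lt m e A
    have hc0 := C₀_pos (m := m) hef hcd.1
    have hd0 := C₀_pos (m := m) hef hcd.2.1
    rcases hv with ⟨hva | hva, hvc | hvc⟩
    · exfalso
      have hAc : A = c := hva.symm.trans hvc
      have hBd : B = d := nextIn_succ_unique m (hAc ▸ hAB) hCCcd
      exact hABne ⟨hAc, hBd⟩
    · have hdA : d = A := hvc.symm.trans hva
      have hde : d = e := by
        rw [pv_eq_iff m e]
        have hh : pv m e d = pv m e A := by rw [hdA]
        omega
      exact ⟨e, Sym2.mem_iff.mpr (Or.inl rfl), Sym2.mem_iff.mpr (Or.inr hde.symm)⟩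
    · have hcB : c = B := hvc.symm.trans hva
      have hcf : c = f := by
        rw [pv_eq_iff m e]
        have hh : pv m e c = pv m e B := by rw [hcB]
        omega
      exact ⟨f, Sym2.mem_iff.mpr (Or.inr rfl), Sym2.mem_iff.mpr (Or.inl hcf.symm)⟩
    · exfalso
      have hBd : B = d := hva.symm.trans hvc
      have hAc : A = c := nextIn_pred_unique m (hBd ▸ hAB) hCCcd
      exact hABne ⟨hAc, hBd⟩

end Step3
section Step4
variable {m : ℕ} [NeZero m]

lemma step {D : Finset (Sym2 (ZMod m))} (hm3 : 3 ≤ m) (hD : IsDissection m D)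
    {δ : Sym2 (ZMod m)} (hδD : δ ∉ D) (hDδ : IsDissection m (insert δ D))
    {q : Sym2 (ZMod m)} (hq : IsAccordionDiag m D q) :
    IsAccordionDiag m (insert δ D) q := by
  obtain ⟨i, j, rfl⟩ : ∃ i j : ZMod m, q = s(i,j) := by
    induction q using Sym2.ind with | _ i j => exact ⟨i, j, rfl⟩
  refine ⟨hq.1, ?_⟩
  intro C₀ hC
  by_cases hedge : ∃ g h : ZMod m, δ = s(g,h) ∧ nextIn m C₀ g h
  · -- the new diagonal is an edge of this cell: merge across it
    obtain ⟨e, f, rfl, hef⟩ := hedge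
    have hc2 : 2 ≤ C₀.card := by have := hC.1; omega
    obtain ⟨a, b, hab, hia⟩ := find_gap m hc2 i
    obtain ⟨c, d, hcd, hjc⟩ := find_gap m hc2 j
    by_cases hsame : a = c ∧ b = d
    · -- both black endpoints in the same gap: the diagonal crosses no edge
      left
      intro p hpE hBW
      obtain ⟨u, v, rfl, huv⟩ := hpE
      have hiff := (bwcross_iff m huv.2.2.1).mp hBW
      by_cases hbi : bbtw m u i v
      · have h1 := gap_unique m i huv hab hbi hia
        have hbj : bbtw m u j v := by
          rw [h1.1, h1.2, hsame.1, hsame.2]; exact hjc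
        exact (hiff.mp hbi) hbj
      · have hbj : bbtw m u j v := by
          by_contra hc'
          exact hbi (hiff.mpr hc')
        have h1 := gap_unique m j huv hcd hbj hjc
        apply hbi
        rw [h1.1, h1.2, ← hsame.1, ← hsame.2]; exact hia
    · -- the two crossed edges of C₀
      right
      have hq_ab : BWCross m s(i,j) s(a,b) := by
        rw [bwcross_iff m hab.2.2.1]
        constructor
        · intro _ hj'
          exact hsame ⟨(gap_unique m j hab hcd hj' hjc).1, (gap_unique m j hab hcd hj' hjc).2⟩
        · intro _; exact hia
      have hq_cd : BWCross m s(i,j) s(c,d) := by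
        rw [bwcross_iff m hcd.2.2.1]
        constructor
        · intro hi'
          exfalso
          exact hsame ⟨(gap_unique m i hab hcd hia hi').1,
            (gap_unique m i hab hcd hia hi').2⟩
        · intro hnj
          exact absurd hjc hnj
      have hne12 : (s(a,b) : Sym2 (ZMod m)) ≠ s(c,d) := by
        intro hcon
        rcases Sym2.eq_iff.mp hcon with ⟨h1, h2⟩ | ⟨h1, h2⟩
        · exact hsame ⟨h1, h2⟩
        · subst h1; subst h2
          exact nextIn_not_both m hC.1 hcd hab
      have hδD' : s(e,f) ∉ D := hδD
      have hshared : ∃ v : ZMod m, v ∈ (s(a,b) : Sym2 (ZMod m)) ∧ v ∈ (s(c,d) : Sym2 (ZMod m)) := by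
        by_cases h1 : a = e ∧ b = f
        · by_cases h2 : c = e ∧ d = f
          · exact absurd ⟨h1.1.trans h2.1.symm, h1.2.trans h2.2.symm⟩ hsame
          · have hi' : bbtw m e i f := by rw [← h1.1, ← h1.2]; exact hia
            obtain ⟨v, hv1, hv2⟩ := share hm3 hD hδD' hDδ hC hef hq hi' hcd hjc h2
            rw [← h1.1, ← h1.2] at hv1
            exact ⟨v, hv1, hv2⟩
        · by_cases h2 : c = e ∧ d = f
          · have hq' : IsAccordionDiag m D s(j,i) := by rw [Sym2.eq_swap]; exact hq
            have hj' : bbtw m e j f := by rw [← h2.1, ← h2.2]; exact hjc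
            obtain ⟨v, hv1, hv2⟩ := share hm3 hD hδD' hDδ hC hef hq' hj' hab hia h1
            rw [← h2.1, ← h2.2] at hv1
            exact ⟨v, hv2, hv1⟩
          · -- neither gap is (e,f): both are gaps of the merged cell
            have hcell := merged_isCell hm3 hD hδD' hDδ hC hef
            have hCCab := gap_transfer hDδ hC hef hab h1
            have hCCcd := gap_transfer hDδ hC hef hcd h2
            rcases hq.2 _ hcell with hleft | ⟨p₁, p₂, hp12, hE1, hE2, hB1, hB2, ⟨v, hv1, hv2⟩, hmax⟩
            · exact absurd hq_ab (hleft _ ⟨a, b, rfl, hCCab⟩)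
            · have e1 := hmax _ ⟨a, b, rfl, hCCab⟩ hq_ab
              have e2 := hmax _ ⟨c, d, rfl, hCCcd⟩ hq_cd
              rcases e1 with h1' | h1' <;> rcases e2 with h2' | h2'
              · exact absurd (h1'.trans h2'.symm) hne12
              · exact ⟨v, h1' ▸ hv1, h2' ▸ hv2⟩
              · exact ⟨v, h1' ▸ hv2, h2' ▸ hv1⟩
              · exact absurd (h1'.trans h2'.symm) hne12
      refine ⟨s(a,b), s(c,d), hne12, ⟨a, b, rfl, hab⟩, ⟨c, d, rfl, hcd⟩, hq_ab, hq_cd, hshared, ?_⟩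
      intro p hpE hBW
      obtain ⟨u, v, rfl, huv⟩ := hpE
      have hiff := (bwcross_iff m huv.2.2.1).mp hBW
      by_cases hbi : bbtw m u i v
      · have h1 := gap_unique m i huv hab hbi hia
        left; rw [h1.1, h1.2]
      · have hbj : bbtw m u j v := by
          by_contra hc'
          exact hbi (hiff.mpr hc')
        have h1 := gap_unique m j huv hcd hbj hjc
        right; rw [h1.1, h1.2]
  · -- the new diagonal is not an edge of this cell: it is a cell of D as well
    have hcell : IsCell m D C₀ := by
      refine ⟨hC.1, ?_, fun p hp => hC.2.2 p (Finset.mem_insert_of_mem hp)⟩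
      intro a b hab
      rcases hC.2.1 a b hab with h | h
      · exact Or.inl h
      rcases Finset.mem_insert.mp h with h | h
      · exact absurd ⟨a, b, h.symm, hab⟩ hedge
      · exact Or.inr h
    exact hq.2 C₀ hcell

end Step4


/-- **Observation** (Pilaud–Plamondon–Stella, Section 4).
For any two nested dissections `D∘ ⊆ D∘'` of the polygon `P∘`, any `D∘`-accordion diagonal
of `P•` is also a `D∘'`-accordion diagonal of `P•`. -/
theorem accordion_diag_of_nested
    (m : ℕ) (hm : 3 ≤ m)
    (D D' : Finset (Sym2 (ZMod m)))
    (hD : IsDissection m D) (hD' : IsDissection m D') (hDD' : D ⊆ D')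
    (q : Sym2 (ZMod m)) (hq : IsAccordionDiag m D q) :
    IsAccordionDiag m D' q := by
  haveI : NeZero m := ⟨by omega⟩
  suffices H : ∀ n : ℕ, ∀ E : Finset (Sym2 (ZMod m)), IsDissection m E → E ⊆ D' →
      (D' \ E).card ≤ n → IsAccordionDiag m E q → IsAccordionDiag m D' q by
    exact H (D' \ D).card D hD hDD' le_rfl hq
  intro n
  induction n with
  | zero =>
    intro E hE hsub hcard hq'
    have hempty : D' \ E = ∅ := Finset.card_eq_zero.mp (by omega)
    have heq : E = D' :=
      Finset.Subset.antisymm hsub (Finset.sdiff_eq_empty_iff_subset.mp hempty)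
    exact heq ▸ hq'
  | succ n ih =>
    intro E hE hsub hcard hq'
    by_cases hempty : D' \ E = ∅
    · have heq : E = D' :=
        Finset.Subset.antisymm hsub (Finset.sdiff_eq_empty_iff_subset.mp hempty)
      exact heq ▸ hq'
    · obtain ⟨δ, hδ⟩ := Finset.nonempty_iff_ne_empty.mpr hempty
      rw [Finset.mem_sdiff] at hδ
      have hEδsub : insert δ E ⊆ D' := Finset.insert_subset hδ.1 hsub
      have hEδ : IsDissection m (insert δ E) :=
        ⟨fun p hp => hD'.1 p (hEδsub hp), fun p hp p' hp' => hD'.2 p (hEδsub hp) p' (hEδsub hp')⟩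
      have hcard' : (D' \ insert δ E).card ≤ n := by
        rw [Finset.sdiff_insert]
        have h1 : δ ∈ D' \ E := Finset.mem_sdiff.mpr hδ
        have h2 := Finset.card_erase_of_mem h1
        omega
      exact ih (insert δ E) hEδ hEδsub hcard' (step hm hE hδ.2 hEδ hq')
end
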